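/- arXiv:1304.1826 — 7 statements merged into one kernel-verified Lean document; each statement's English description precedes it below -/
import Mathlib

section
/- Let $A = (a_{\mathbf{i}})_{\mathbf{i} \in [n]^d}$ be a $d$-indexed real matrix and let $C = \{\mathbf{i} \in [n]^d : i_k = i_l \text{ for all } k,l \in K\}$ for some fixed subset $K \subseteq [d]$. Then for every partition $\mathcal{J}$ of $[d]$, $\|A \circ \mathbf{1}_C\|_{\mathcal{J}} \le \|A\|_{\mathcal{J}}$, i.e., restricting a matrix to a generalized diagonal does not increase any $\|\cdot\|_{\mathcal{J}}$ norm. -/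
open Finset

/-- The tensor-product norm `‖A‖_𝒥` of a `d`-indexed matrix
`A = (a_i)_{i ∈ [n]^d}` associated to a partition `P` of `[d]`:
the supremum of `∑_i a_i ∏_{J ∈ P} x^{(J)}_{i_J}` over families of arrays
`x^{(J)}` indexed by `[n]^J`, each of Euclidean norm at most `1`. -/
noncomputable def normJ {n d : ℕ} (A : (Fin d → Fin n) → ℝ)
    (P : Finpartition (Finset.univ : Finset (Fin d))) : ℝ :=
  sSup {S : ℝ |
    ∃ x : (J : Finset (Fin d)) → ({k : Fin d // k ∈ J} → Fin n) → ℝ,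
      (∀ J ∈ P.parts, ∑ y : {k : Fin d // k ∈ J} → Fin n, (x J y) ^ 2 ≤ 1) ∧
      S = ∑ i : Fin d → Fin n, A i * ∏ J ∈ P.parts, x J (fun k => i k.1)}

namespace NormJAux

variable {n d : ℕ}

/-- The set whose supremum defines `normJ`. -/
def theSet (A : (Fin d → Fin n) → ℝ)
    (P : Finpartition (Finset.univ : Finset (Fin d))) : Set ℝ :=
  {S : ℝ |
    ∃ x : (J : Finset (Fin d)) → ({k : Fin d // k ∈ J} → Fin n) → ℝ,
      (∀ J ∈ P.parts, ∑ y : {k : Fin d // k ∈ J} → Fin n, (x J y) ^ 2 ≤ 1) ∧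
      S = ∑ i : Fin d → Fin n, A i * ∏ J ∈ P.parts, x J (fun k => i k.1)}

lemma normJ_eq (A : (Fin d → Fin n) → ℝ)
    (P : Finpartition (Finset.univ : Finset (Fin d))) :
    normJ A P = sSup (theSet A P) := rfl

lemma theSet_nonempty (A : (Fin d → Fin n) → ℝ)
    (P : Finpartition (Finset.univ : Finset (Fin d))) :
    (theSet A P).Nonempty := by
  refine ⟨_, fun _ _ => 0, fun J _ => by simp, rfl⟩

lemma theSet_bddAbove (A : (Fin d → Fin n) → ℝ)
    (P : Finpartition (Finset.univ : Finset (Fin d))) :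
    BddAbove (theSet A P) := by
  refine ⟨∑ i : Fin d → Fin n, |A i|, ?_⟩
  rintro S ⟨x, hx, rfl⟩
  have hb : ∀ (J : Finset (Fin d)), J ∈ P.parts →
      ∀ y : {k : Fin d // k ∈ J} → Fin n, |x J y| ≤ 1 := by
    intro J hJ y
    rw [← sq_le_one_iff_abs_le_one]
    calc (x J y) ^ 2 ≤ ∑ z : {k : Fin d // k ∈ J} → Fin n, (x J z) ^ 2 :=
          Finset.single_le_sum (f := fun z => (x J z) ^ 2)
            (fun z _ => sq_nonneg _) (mem_univ y)
      _ ≤ 1 := hx J hJ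
  calc (∑ i : Fin d → Fin n, A i * ∏ J ∈ P.parts, x J (fun k => i k.1))
      ≤ ∑ i : Fin d → Fin n, |A i * ∏ J ∈ P.parts, x J (fun k => i k.1)| :=
        Finset.sum_le_sum fun i _ => le_abs_self _
    _ ≤ ∑ i : Fin d → Fin n, |A i| := by
        refine Finset.sum_le_sum fun i _ => ?_
        rw [abs_mul]
        have : |∏ J ∈ P.parts, x J (fun k => i k.1)| ≤ 1 := by
          rw [Finset.abs_prod]
          refine Finset.prod_le_one (fun J _ => abs_nonneg _) fun J hJ => hb J hJ _
        calc |A i| * |∏ J ∈ P.parts, x J (fun k => i k.1)| ≤ |A i| * 1 :=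
              mul_le_mul_of_nonneg_left this (abs_nonneg _)
          _ = |A i| := mul_one _

/-- Rademacher sign function. -/
def eps (σ : Fin n → Bool) (j : Fin n) : ℝ := if σ j then 1 else -1

lemma eps_mul_self (σ : Fin n → Bool) (j : Fin n) : eps σ j * eps σ j = 1 := by
  by_cases h : σ j <;> simp [eps, h]

lemma eps_sq (σ : Fin n → Bool) (j : Fin n) : (eps σ j) ^ 2 = 1 := by
  rw [sq]; exact eps_mul_self σ j

/-- The basic Rademacher orthogonality identity. -/
lemma rad (a b : Fin n) :
    ∑ σ : Fin n → Bool, eps σ a * eps σ b = if a = b then (2 ^ n : ℝ) else 0 := by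
  by_cases hab : a = b
  · subst hab
    rw [if_pos rfl]
    rw [Finset.sum_congr rfl fun σ _ => eps_mul_self σ a]
    simp [Finset.card_univ]
  · rw [if_neg hab]
    have hinv : Function.Involutive
        (fun σ : Fin n → Bool => Function.update σ a (!σ a)) := by
      intro σ
      funext j
      by_cases h : j = a
      · subst h; simp
      · simp [Function.update_of_ne h]
    have hflip : ∀ σ : Fin n → Bool,
        eps (Function.update σ a (!σ a)) a * eps (Function.update σ a (!σ a)) b
          = -(eps σ a * eps σ b) := by
      intro σ
      have h1 : eps (Function.update σ a (!σ a)) a = -(eps σ a) := by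
        by_cases h : σ a <;> simp [eps, h]
      have h2 : eps (Function.update σ a (!σ a)) b = eps σ b := by
        have hba : b ≠ a := fun h => hab h.symm
        simp [eps, Function.update_of_ne hba]
      rw [h1, h2, neg_mul]
    have := Equiv.sum_comp (hinv.toPerm _) (fun σ => eps σ a * eps σ b)
    simp only [Function.Involutive.coe_toPerm] at this
    have h2 : ∑ σ : Fin n → Bool, eps σ a * eps σ b
        = -∑ σ : Fin n → Bool, eps σ a * eps σ b := by
      conv_lhs => rw [← this]
      rw [← Finset.sum_neg_distrib]
      exact Finset.sum_congr rfl fun σ _ => hflip σ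
    linarith

/-- An element lies in exactly one part of the partition. -/
lemma prod_ite_mem (P : Finpartition (Finset.univ : Finset (Fin d)))
    (k : Fin d) (c : ℝ) :
    ∏ J ∈ P.parts, (if k ∈ J then c else 1) = c := by
  obtain ⟨J0, ⟨hJ0, hk⟩, huniq⟩ := P.existsUnique_mem (mem_univ k)
  rw [Finset.prod_eq_single_of_mem J0 hJ0 fun J hJ hne => ?_]
  · rw [if_pos hk]
  · rw [if_neg]
    intro hkJ
    exact hne (huniq J ⟨hJ, hkJ⟩)

/-- The key lemma: restricting to a single pairwise diagonal does not increase
the norm. -/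
lemma pair (A : (Fin d → Fin n) → ℝ)
    (P : Finpartition (Finset.univ : Finset (Fin d))) (k l : Fin d) :
    normJ (fun i => if i k = i l then A i else 0) P ≤ normJ A P := by
  rw [normJ_eq, normJ_eq]
  refine csSup_le (theSet_nonempty _ _) ?_
  rintro S ⟨x, hx, rfl⟩
  -- twisted vectors
  set x' : (Fin n → Bool) → (J : Finset (Fin d)) →
      ({m : Fin d // m ∈ J} → Fin n) → ℝ :=
    fun σ J y => x J y *
      ((if h : k ∈ J then eps σ (y ⟨k, h⟩) else 1) *
       (if h : l ∈ J then eps σ (y ⟨l, h⟩) else 1)) with hx'def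
  set T : (Fin n → Bool) → ℝ :=
    fun σ => ∑ i : Fin d → Fin n, A i * ∏ J ∈ P.parts, x' σ J (fun m => i m.1)
    with hTdef
  have hTmem : ∀ σ, T σ ∈ theSet A P := by
    intro σ
    refine ⟨x' σ, ?_, rfl⟩
    intro J hJ
    have hsq : ∀ y : {m : Fin d // m ∈ J} → Fin n, (x' σ J y) ^ 2 = (x J y) ^ 2 := by
      intro y
      rw [hx'def]
      simp only [mul_pow]
      have e1 : (if h : k ∈ J then eps σ (y ⟨k, h⟩) else 1) ^ 2 = 1 := by
        by_cases h : k ∈ J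
        · rw [dif_pos h, eps_sq]
        · rw [dif_neg h, one_pow]
      have e2 : (if h : l ∈ J then eps σ (y ⟨l, h⟩) else 1) ^ 2 = 1 := by
        by_cases h : l ∈ J
        · rw [dif_pos h, eps_sq]
        · rw [dif_neg h, one_pow]
      rw [e1, e2]
      ring
    rw [Finset.sum_congr rfl fun y _ => hsq y]
    exact hx J hJ
  have hTle : ∀ σ, T σ ≤ sSup (theSet A P) :=
    fun σ => le_csSup (theSet_bddAbove A P) (hTmem σ)
  -- rewrite the sum S using the sign-averaging identity
  have hT : ∀ σ, T σ = ∑ i : Fin d → Fin n,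
      (eps σ (i k) * eps σ (i l)) * (A i * ∏ J ∈ P.parts, x J (fun m => i m.1)) := by
    intro σ
    rw [hTdef]
    refine Finset.sum_congr rfl fun i _ => ?_
    have hprod : ∏ J ∈ P.parts, x' σ J (fun m => i m.1)
        = (∏ J ∈ P.parts, x J (fun m => i m.1)) * (eps σ (i k) * eps σ (i l)) := by
      rw [hx'def]
      simp only
      rw [Finset.prod_mul_distrib, Finset.prod_mul_distrib]
      congr 1
      congr 1
      · rw [Finset.prod_congr rfl fun J _ => dite_eq_ite ..]
        exact prod_ite_mem P k (eps σ (i k))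
      · rw [Finset.prod_congr rfl fun J _ => dite_eq_ite ..]
        exact prod_ite_mem P l (eps σ (i l))
    rw [hprod]
    ring
  have hS : (∑ i : Fin d → Fin n,
        (if i k = i l then A i else 0) * ∏ J ∈ P.parts, x J (fun m => i m.1))
      = (2 ^ n : ℝ)⁻¹ * ∑ σ : Fin n → Bool, T σ := by
    have hterm : ∀ i : Fin d → Fin n,
        (if i k = i l then A i else 0) * ∏ J ∈ P.parts, x J (fun m => i m.1)
        = (2 ^ n : ℝ)⁻¹ * ∑ σ : Fin n → Bool,
            (eps σ (i k) * eps σ (i l)) * (A i * ∏ J ∈ P.parts, x J (fun m => i m.1)) := by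
      intro i
      rw [← Finset.sum_mul, rad (i k) (i l)]
      by_cases h : i k = i l
      · rw [if_pos h, if_pos h, ← mul_assoc,
          inv_mul_cancel₀ (by positivity : (2 ^ n : ℝ) ≠ 0), one_mul]
      · rw [if_neg h, if_neg h]
        simp
    rw [Finset.sum_congr rfl fun i _ => hterm i, ← Finset.mul_sum]
    congr 1
    rw [Finset.sum_comm]
    exact Finset.sum_congr rfl fun σ _ => (hT σ).symm
  rw [hS]
  have hsum : ∑ σ : Fin n → Bool, T σ ≤ (2 ^ n : ℝ) * sSup (theSet A P) := by
    calc ∑ σ : Fin n → Bool, T σ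
        ≤ ∑ _σ : Fin n → Bool, sSup (theSet A P) :=
          Finset.sum_le_sum fun σ _ => hTle σ
      _ = (2 ^ n : ℝ) * sSup (theSet A P) := by
          rw [Finset.sum_const, Finset.card_univ]
          simp [nsmul_eq_mul]
  calc (2 ^ n : ℝ)⁻¹ * ∑ σ : Fin n → Bool, T σ
      ≤ (2 ^ n : ℝ)⁻¹ * ((2 ^ n : ℝ) * sSup (theSet A P)) :=
        mul_le_mul_of_nonneg_left hsum (by positivity)
    _ = sSup (theSet A P) := by
        rw [← mul_assoc, inv_mul_cancel₀ (by positivity : (2 ^ n : ℝ) ≠ 0), one_mul]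

/-- Restricting to the diagonal `i_k = i_{k_0}` for all `k ∈ T`. -/
lemma multi (A : (Fin d → Fin n) → ℝ)
    (P : Finpartition (Finset.univ : Finset (Fin d))) (k0 : Fin d)
    (T : Finset (Fin d)) :
    normJ (fun i => if ∀ k ∈ T, i k = i k0 then A i else 0) P ≤ normJ A P := by
  induction T using Finset.induction_on with
  | empty =>
      have : (fun i : Fin d → Fin n =>
          if ∀ k ∈ (∅ : Finset (Fin d)), i k = i k0 then A i else 0) = A := by
        funext i
        rw [if_pos (by simp)]
      rw [this]
  | @insert a s ha ih =>
      have heq : (fun i : Fin d → Fin n =>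
            if ∀ k ∈ insert a s, i k = i k0 then A i else 0)
          = (fun i => if i a = i k0 then
              (if ∀ k ∈ s, i k = i k0 then A i else 0) else 0) := by
        funext i
        by_cases h1 : i a = i k0
        · by_cases h2 : ∀ k ∈ s, i k = i k0
          · rw [if_pos h1, if_pos h2, if_pos]
            intro k hk
            rcases Finset.mem_insert.1 hk with rfl | hk
            · exact h1
            · exact h2 k hk
          · rw [if_pos h1, if_neg h2, if_neg]
            intro h
            exact h2 fun k hk => h k (Finset.mem_insert_of_mem hk)
        · rw [if_neg h1, if_neg]
          intro h
          exact h1 (h a (Finset.mem_insert_self a s))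
      rw [heq]
      exact le_trans (pair _ P a k0) ih

end NormJAux

/-- Restricting a matrix to a generalized diagonal
`C = {i ∈ [n]^d : i_k = i_l for all k,l ∈ K}` does not increase any `‖·‖_𝒥` norm:
`‖A ∘ 1_C‖_𝒥 ≤ ‖A‖_𝒥`. -/
theorem stmt1 (n d : ℕ) (A : (Fin d → Fin n) → ℝ) (K : Finset (Fin d))
    (P : Finpartition (Finset.univ : Finset (Fin d))) :
    normJ (fun i => if ∀ k ∈ K, ∀ l ∈ K, i k = i l then A i else 0) P ≤ normJ A P := by
  rcases K.eq_empty_or_nonempty with rfl | ⟨k0, hk0⟩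
  · have : (fun i : Fin d → Fin n =>
        if ∀ k ∈ (∅ : Finset (Fin d)), ∀ l ∈ (∅ : Finset (Fin d)), i k = i l
        then A i else 0) = A := by
      funext i
      rw [if_pos (by simp)]
    rw [this]
  · have heq : (fun i : Fin d → Fin n =>
          if ∀ k ∈ K, ∀ l ∈ K, i k = i l then A i else 0)
        = (fun i => if ∀ k ∈ K, i k = i k0 then A i else 0) := by
      funext i
      congr 1
      simp only [eq_iff_iff]
      constructor
      · intro h k hk
        exact h k hk k0 hk0
      · intro h k hk l hl
        exact (h k hk).trans (h l hl).symm
    rw [heq]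
    exact NormJAux.multi A P k0 K
end

section
/- Let $A$ be a $d$-indexed real matrix and let $\mathcal{K} \in P_d$ be a partition of $[d]$. Define $L(\mathcal{K}) = \{\mathbf{i} \in [n]^d : i_k = i_l \text{ iff } k,l \text{ belong to the same block of } \mathcal{K}\}$. Then for every partition $\mathcal{J}$ of $[d]$, $\|A \circ \mathbf{1}_{L(\mathcal{K})}\|_{\mathcal{J}} \le 2^{\#\mathcal{K}(\#\mathcal{K}-1)/2} \|A\|_{\mathcal{J}}$. -/
open Finset

section Aux

variable {n d : ℕ}

/-- The defining set of `normJ`. -/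
def njSet (A : (Fin d → Fin n) → ℝ) (P : Finpartition (Finset.univ : Finset (Fin d))) : Set ℝ :=
  {S : ℝ |
    ∃ x : (J : Finset (Fin d)) → ({k : Fin d // k ∈ J} → Fin n) → ℝ,
      (∀ J ∈ P.parts, ∑ y : {k : Fin d // k ∈ J} → Fin n, (x J y) ^ 2 ≤ 1) ∧
      S = ∑ i : Fin d → Fin n, A i * ∏ J ∈ P.parts, x J (fun k => i k.1)}

lemma normJ_eq_sSup (A : (Fin d → Fin n) → ℝ)
    (P : Finpartition (Finset.univ : Finset (Fin d))) : normJ A P = sSup (njSet A P) := rfl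

lemma abs_le_one_of_sq_le_one {t : ℝ} (h : t^2 ≤ 1) : |t| ≤ 1 := by
  nlinarith [abs_nonneg t, sq_abs t]

lemma njSet_bddAbove {n d : ℕ} (A : (Fin d → Fin n) → ℝ)
    (P : Finpartition (Finset.univ : Finset (Fin d))) : BddAbove (njSet A P) := by
  refine ⟨∑ i : Fin d → Fin n, |A i|, ?_⟩
  rintro S ⟨x, hx, rfl⟩
  calc ∑ i : Fin d → Fin n, A i * ∏ J ∈ P.parts, x J (fun k => i k.1)
      ≤ ∑ i : Fin d → Fin n, |A i * ∏ J ∈ P.parts, x J (fun k => i k.1)| :=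
        Finset.sum_le_sum fun i _ => le_abs_self _
    _ ≤ ∑ i : Fin d → Fin n, |A i| := by
        refine Finset.sum_le_sum fun i _ => ?_
        rw [abs_mul]
        have h1 : |∏ J ∈ P.parts, x J (fun k => i k.1)| ≤ 1 := by
          rw [Finset.abs_prod]
          refine Finset.prod_le_one (fun J _ => abs_nonneg _) fun J hJ => ?_
          refine abs_le_one_of_sq_le_one ?_
          exact le_trans (Finset.single_le_sum (f := fun y => (x J y)^2)
            (fun y _ => sq_nonneg _) (Finset.mem_univ _)) (hx J hJ)
        nlinarith [abs_nonneg (A i)]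


section Basic
variable (A B : (Fin d → Fin n) → ℝ) (P : Finpartition (Finset.univ : Finset (Fin d)))

lemma le_normJ {S : ℝ} (h : S ∈ njSet A P) : S ≤ normJ A P :=
  le_csSup (njSet_bddAbove A P) h

lemma normJ_nonneg (hP : P.parts.Nonempty) : 0 ≤ normJ A P := by
  refine le_normJ A P ⟨fun _ _ => 0, fun J hJ => by simp, ?_⟩
  obtain ⟨J0, hJ0⟩ := hP
  rw [eq_comm]
  refine Finset.sum_eq_zero fun i _ => ?_
  rw [Finset.prod_eq_zero hJ0 rfl, mul_zero]

lemma normJ_le (hP : P.parts.Nonempty) {a : ℝ} (ha : 0 ≤ a)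
    (h : ∀ S ∈ njSet A P, S ≤ a) : normJ A P ≤ a :=
  Real.sSup_le h ha

lemma normJ_neg_le (hP : P.parts.Nonempty) :
    normJ (fun i => -A i) P ≤ normJ A P := by
  refine normJ_le _ P hP (normJ_nonneg A P hP) ?_
  rintro S ⟨x, hx, rfl⟩
  obtain ⟨J0, hJ0⟩ := hP
  classical
  refine le_normJ A P ⟨fun J y => if J = J0 then -x J y else x J y, ?_, ?_⟩
  · intro J hJ
    refine le_trans (le_of_eq (Finset.sum_congr rfl fun y _ => ?_)) (hx J hJ)
    simp only []
    split <;> ring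
  · refine Finset.sum_congr rfl fun i _ => ?_
    simp only []
    rw [← Finset.mul_prod_erase _ (fun J => if J = J0 then -x J (fun k => i k.1) else x J (fun k => i k.1)) hJ0,
      ← Finset.mul_prod_erase _ (fun J => x J (fun k => i k.1)) hJ0]
    have : ∀ J ∈ P.parts.erase J0, (if J = J0 then -x J (fun k => i k.1) else x J (fun k => i k.1))
        = x J (fun k => i k.1) := by
      intro J hJ; rw [if_neg (Finset.ne_of_mem_erase hJ)]
    rw [Finset.prod_congr rfl this, if_pos rfl]
    ring

lemma normJ_add_le (hP : P.parts.Nonempty) :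
    normJ (fun i => A i + B i) P ≤ normJ A P + normJ B P := by
  refine normJ_le _ P hP (by
    have := normJ_nonneg A P hP; have := normJ_nonneg B P hP; linarith) ?_
  rintro S ⟨x, hx, rfl⟩
  have h1 : (∑ i : Fin d → Fin n, A i * ∏ J ∈ P.parts, x J (fun k => i k.1)) ≤ normJ A P :=
    le_normJ A P ⟨x, hx, rfl⟩
  have h2 : (∑ i : Fin d → Fin n, B i * ∏ J ∈ P.parts, x J (fun k => i k.1)) ≤ normJ B P :=
    le_normJ B P ⟨x, hx, rfl⟩
  calc ∑ i : Fin d → Fin n, (A i + B i) * ∏ J ∈ P.parts, x J (fun k => i k.1)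
      = (∑ i : Fin d → Fin n, A i * ∏ J ∈ P.parts, x J (fun k => i k.1))
        + ∑ i : Fin d → Fin n, B i * ∏ J ∈ P.parts, x J (fun k => i k.1) := by
        rw [← Finset.sum_add_distrib]; exact Finset.sum_congr rfl fun i _ => by ring
    _ ≤ normJ A P + normJ B P := add_le_add h1 h2

lemma normJ_sum_le {ι : Type*} (s : Finset ι) (F : ι → (Fin d → Fin n) → ℝ)
    (hP : P.parts.Nonempty) :
    normJ (fun i => ∑ t ∈ s, F t i) P ≤ ∑ t ∈ s, normJ (F t) P := by
  classical
  induction s using Finset.induction with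
  | empty =>
    simp only [Finset.sum_empty]
    refine normJ_le _ P hP le_rfl ?_
    rintro S ⟨x, hx, rfl⟩
    simp
  | insert a s hnot ih =>
    have : (fun i => ∑ t ∈ insert a s, F t i) = fun i => F a i + ∑ t ∈ s, F t i := by
      funext i; rw [Finset.sum_insert hnot]
    rw [this, Finset.sum_insert hnot]
    exact le_trans (normJ_add_le _ _ P hP) (by linarith [ih])


end Basic

/-- modifier for the "same part" case -/
def modxE (x : (J : Finset (Fin d)) → ({k' : Fin d // k' ∈ J} → Fin n) → ℝ) (k l : Fin d) :
    (J : Finset (Fin d)) → ({k' : Fin d // k' ∈ J} → Fin n) → ℝ :=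
  fun J y => if h : k ∈ J ∧ l ∈ J then (if y ⟨k, h.1⟩ = y ⟨l, h.2⟩ then x J y else 0) else x J y

/-- modifier for the "different parts" case -/
def modx (x : (J : Finset (Fin d)) → ({k' : Fin d // k' ∈ J} → Fin n) → ℝ)
    (J1 J2 : Finset (Fin d)) (k l : Fin d) (hk : k ∈ J1) (hl : l ∈ J2) (a : Fin n) :
    (J : Finset (Fin d)) → ({k' : Fin d // k' ∈ J} → Fin n) → ℝ :=
  fun J y =>
    if h1 : J = J1 then (if y ⟨k, h1.symm ▸ hk⟩ = a then x J y else 0)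
    else if h2 : J = J2 then (if y ⟨l, h2.symm ▸ hl⟩ = a then x J y else 0)
    else x J y

lemma modx_eval1 (x : (J : Finset (Fin d)) → ({k' : Fin d // k' ∈ J} → Fin n) → ℝ)
    {J1 J2 : Finset (Fin d)} {k l : Fin d} (hk : k ∈ J1) (hl : l ∈ J2) (a : Fin n)
    (y : {k' : Fin d // k' ∈ J1} → Fin n) :
    modx x J1 J2 k l hk hl a J1 y = if y ⟨k, hk⟩ = a then x J1 y else 0 := by
  simp [modx]

lemma modx_eval2 (x : (J : Finset (Fin d)) → ({k' : Fin d // k' ∈ J} → Fin n) → ℝ)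
    {J1 J2 : Finset (Fin d)} {k l : Fin d} (hk : k ∈ J1) (hl : l ∈ J2) (a : Fin n)
    (hne : J1 ≠ J2) (y : {k' : Fin d // k' ∈ J2} → Fin n) :
    modx x J1 J2 k l hk hl a J2 y = if y ⟨l, hl⟩ = a then x J2 y else 0 := by
  simp [modx, hne.symm]

lemma modx_eval3 (x : (J : Finset (Fin d)) → ({k' : Fin d // k' ∈ J} → Fin n) → ℝ)
    {J1 J2 J : Finset (Fin d)} {k l : Fin d} (hk : k ∈ J1) (hl : l ∈ J2) (a : Fin n)
    (h1 : J ≠ J1) (h2 : J ≠ J2) (y : {k' : Fin d // k' ∈ J} → Fin n) :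
    modx x J1 J2 k l hk hl a J y = x J y := by
  simp [modx, h1, h2]

lemma normJ_pair_le (A : (Fin d → Fin n) → ℝ)
    (P : Finpartition (Finset.univ : Finset (Fin d))) (k l : Fin d) :
    normJ (fun i => if i k = i l then A i else 0) P ≤ normJ A P := by
  classical
  have hk1 : k ∈ P.part k := P.mem_part (mem_univ k)
  have hl2 : l ∈ P.part l := P.mem_part (mem_univ l)
  have hJ1 : P.part k ∈ P.parts := P.part_mem.2 (mem_univ k)
  have hJ2 : P.part l ∈ P.parts := P.part_mem.2 (mem_univ l)
  set J1 := P.part k with hJ1def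
  set J2 := P.part l with hJ2def
  have hPne : P.parts.Nonempty := ⟨J1, hJ1⟩
  refine normJ_le _ P hPne (normJ_nonneg A P hPne) ?_
  rintro S ⟨x, hx, rfl⟩
  by_cases hJ : J1 = J2
  · -- k and l in the same part of P
    refine le_normJ A P ⟨modxE x k l, ?_, ?_⟩
    · intro J hJmem
      refine le_trans (Finset.sum_le_sum fun y _ => ?_) (hx J hJmem)
      unfold modxE
      split_ifs
      · exact le_rfl
      · simpa using sq_nonneg (x J y)
      · exact le_rfl
    · refine Finset.sum_congr rfl fun i _ => ?_
      simp only []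
      by_cases hil : i k = i l
      · rw [if_pos hil]
        congr 1
        refine (Finset.prod_congr rfl fun J _ => ?_).symm
        unfold modxE
        split_ifs <;> rfl
      · rw [if_neg hil, zero_mul, eq_comm]
        have h0 : modxE x k l J1 (fun k' => i k'.1) = 0 := by
          unfold modxE
          rw [dif_pos ⟨hk1, hJ.symm ▸ hl2⟩, if_neg]
          exact hil
        rw [Finset.prod_eq_zero hJ1 h0, mul_zero]
  · -- k and l in different parts
    have hJ2' : J2 ∈ P.parts.erase J1 := Finset.mem_erase.2 ⟨fun h => hJ h.symm, hJ2⟩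
    set E := (P.parts.erase J1).erase J2 with hEdef
    have hEne : ∀ J ∈ E, J ≠ J1 ∧ J ≠ J2 := by
      intro J hJE
      exact ⟨Finset.ne_of_mem_erase (Finset.mem_of_mem_erase hJE), Finset.ne_of_mem_erase hJE⟩
    have hsplit : ∀ f : Finset (Fin d) → ℝ,
        ∏ J ∈ P.parts, f J = f J1 * (f J2 * ∏ J ∈ E, f J) := by
      intro f
      rw [← Finset.mul_prod_erase _ f hJ1, ← Finset.mul_prod_erase _ f hJ2']
    set xa := fun a => modx x J1 J2 k l hk1 hl2 a with hxadef
    set s1 := fun a => ∑ y : {k' : Fin d // k' ∈ J1} → Fin n, (xa a J1 y)^2 with hs1def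
    set s2 := fun a => ∑ y : {k' : Fin d // k' ∈ J2} → Fin n, (xa a J2 y)^2 with hs2def
    have hs1nn : ∀ a, 0 ≤ s1 a := fun a => Finset.sum_nonneg fun y _ => sq_nonneg _
    have hs2nn : ∀ a, 0 ≤ s2 a := fun a => Finset.sum_nonneg fun y _ => sq_nonneg _
    have hs1sum : ∑ a : Fin n, s1 a ≤ 1 := by
      calc ∑ a : Fin n, s1 a = ∑ y : {k' : Fin d // k' ∈ J1} → Fin n, (x J1 y)^2 := by
            rw [Finset.sum_comm]
            refine Finset.sum_congr rfl fun y _ => ?_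
            simp only [hs1def, hxadef, modx_eval1 x hk1 hl2, apply_ite (· ^ 2)]
            simp [Finset.sum_ite_eq]
        _ ≤ 1 := hx J1 hJ1
    have hs2sum : ∑ a : Fin n, s2 a ≤ 1 := by
      calc ∑ a : Fin n, s2 a = ∑ y : {k' : Fin d // k' ∈ J2} → Fin n, (x J2 y)^2 := by
            rw [Finset.sum_comm]
            refine Finset.sum_congr rfl fun y _ => ?_
            simp only [hs2def, hxadef, modx_eval2 x hk1 hl2 _ hJ, apply_ite (· ^ 2)]
            simp [Finset.sum_ite_eq]
        _ ≤ 1 := hx J2 hJ2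
    have hprod : ∀ (a : Fin n) (i : Fin d → Fin n),
        ∏ J ∈ P.parts, xa a J (fun k' => i k'.1) =
        (if i k = a then x J1 (fun k' => i k'.1) else 0) *
          ((if i l = a then x J2 (fun k' => i k'.1) else 0) *
            ∏ J ∈ E, x J (fun k' => i k'.1)) := by
      intro a i
      rw [hsplit (fun J => xa a J (fun k' => i k'.1))]
      congr 1
      · exact modx_eval1 x hk1 hl2 a _
      congr 1
      · exact modx_eval2 x hk1 hl2 a hJ _
      · exact Finset.prod_congr rfl fun J hJE =>
          modx_eval3 x hk1 hl2 a (hEne J hJE).1 (hEne J hJE).2 _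
    have decomp : (∑ i : Fin d → Fin n,
        (if i k = i l then A i else 0) * ∏ J ∈ P.parts, x J (fun k' => i k'.1)) =
        ∑ a : Fin n, ∑ i : Fin d → Fin n, A i * ∏ J ∈ P.parts, xa a J (fun k' => i k'.1) := by
      rw [Finset.sum_comm]
      refine Finset.sum_congr rfl fun i _ => ?_
      have : ∀ a : Fin n, A i * ∏ J ∈ P.parts, xa a J (fun k' => i k'.1) =
          if i k = a then
            (if i l = a then
              A i * ∏ J ∈ P.parts, x J (fun k' => i k'.1) else 0)
          else 0 := by
        intro a
        rw [hprod a i, hsplit (fun J => x J (fun k' => i k'.1))]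
        split_ifs <;> ring
      rw [Finset.sum_congr rfl fun a _ => this a, Finset.sum_ite_eq]
      simp only [Finset.mem_univ, if_true]
      split_ifs with h1 h2
      · ring
      · exact absurd h1.symm h2
      · exact absurd ‹i l = i k›.symm h1
      · ring
    have key : ∀ a : Fin n,
        (∑ i : Fin d → Fin n, A i * ∏ J ∈ P.parts, xa a J (fun k' => i k'.1))
        ≤ normJ A P * (Real.sqrt (s1 a) * Real.sqrt (s2 a)) := by
      intro a
      by_cases h1 : s1 a = 0
      · have hz : ∀ y, xa a J1 y = 0 := by
          intro y
          have h2 := (Finset.sum_eq_zero_iff_of_nonneg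
            (fun y _ => sq_nonneg (xa a J1 y))).1 h1 y (Finset.mem_univ y)
          exact pow_eq_zero_iff two_ne_zero |>.1 h2
        have hzz : ∑ i : Fin d → Fin n, A i * ∏ J ∈ P.parts, xa a J (fun k' => i k'.1) = 0 :=
          Finset.sum_eq_zero fun i _ => by rw [Finset.prod_eq_zero hJ1 (hz _), mul_zero]
        rw [hzz, h1, Real.sqrt_zero, zero_mul, mul_zero]
      by_cases h2 : s2 a = 0
      · have hz : ∀ y, xa a J2 y = 0 := by
          intro y
          have h3 := (Finset.sum_eq_zero_iff_of_nonneg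
            (fun y _ => sq_nonneg (xa a J2 y))).1 h2 y (Finset.mem_univ y)
          exact pow_eq_zero_iff two_ne_zero |>.1 h3
        have hzz : ∑ i : Fin d → Fin n, A i * ∏ J ∈ P.parts, xa a J (fun k' => i k'.1) = 0 :=
          Finset.sum_eq_zero fun i _ => by rw [Finset.prod_eq_zero hJ2 (hz _), mul_zero]
        rw [hzz, h2, Real.sqrt_zero, mul_zero, mul_zero]
      have hp1 : 0 < s1 a := lt_of_le_of_ne (hs1nn a) (Ne.symm h1)
      have hp2 : 0 < s2 a := lt_of_le_of_ne (hs2nn a) (Ne.symm h2)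
      have hq1 : 0 < Real.sqrt (s1 a) := Real.sqrt_pos.2 hp1
      have hq2 : 0 < Real.sqrt (s2 a) := Real.sqrt_pos.2 hp2
      set x' := fun (J : Finset (Fin d)) (y : {k' : Fin d // k' ∈ J} → Fin n) =>
        if J = J1 then xa a J y / Real.sqrt (s1 a)
        else if J = J2 then xa a J y / Real.sqrt (s2 a)
        else x J y with hx'def
      have hx'1 : ∀ y : {k' : Fin d // k' ∈ J1} → Fin n,
          x' J1 y = xa a J1 y / Real.sqrt (s1 a) := fun y => by
        rw [hx'def]; simp
      have hx'2 : ∀ y : {k' : Fin d // k' ∈ J2} → Fin n,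
          x' J2 y = xa a J2 y / Real.sqrt (s2 a) := fun y => by
        rw [hx'def]
        simp only []
        rw [if_neg (fun h : J2 = J1 => hJ h.symm)]
        simp
      have hx'3 : ∀ J, J ≠ J1 → J ≠ J2 → ∀ y : {k' : Fin d // k' ∈ J} → Fin n,
          x' J y = x J y := fun J e1 e2 y => by
        rw [hx'def]; simp [e1, e2]
      have hfeas : ∀ J ∈ P.parts,
          ∑ y : {k' : Fin d // k' ∈ J} → Fin n, (x' J y)^2 ≤ 1 := by
        intro J hJm
        by_cases e1 : J = J1
        · subst e1
          have heach : ∀ y : {k' : Fin d // k' ∈ J1} → Fin n,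
              (x' J1 y)^2 = (xa a J1 y)^2 / s1 a := fun y => by
            rw [hx'1 y, div_pow, Real.sq_sqrt (hs1nn a)]
          rw [Finset.sum_congr rfl fun y _ => heach y, ← Finset.sum_div]
          have hss : (∑ y : {k' : Fin d // k' ∈ J1} → Fin n, (xa a J1 y)^2) = s1 a := rfl
          rw [hss, div_self (ne_of_gt hp1)]
        by_cases e2 : J = J2
        · subst e2
          have heach : ∀ y : {k' : Fin d // k' ∈ J2} → Fin n,
              (x' J2 y)^2 = (xa a J2 y)^2 / s2 a := fun y => by
            rw [hx'2 y, div_pow, Real.sq_sqrt (hs2nn a)]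
          rw [Finset.sum_congr rfl fun y _ => heach y, ← Finset.sum_div]
          have hss : (∑ y : {k' : Fin d // k' ∈ J2} → Fin n, (xa a J2 y)^2) = s2 a := rfl
          rw [hss, div_self (ne_of_gt hp2)]
        · rw [Finset.sum_congr rfl fun y _ => by rw [hx'3 J e1 e2 y]]
          exact hx J hJm
      have hle := le_normJ A P ⟨x', hfeas, rfl⟩
      have hsum' : (∑ i : Fin d → Fin n, A i * ∏ J ∈ P.parts, x' J (fun k' => i k'.1))
          = (∑ i : Fin d → Fin n, A i * ∏ J ∈ P.parts, xa a J (fun k' => i k'.1))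
            / (Real.sqrt (s1 a) * Real.sqrt (s2 a)) := by
        rw [Finset.sum_div]
        refine Finset.sum_congr rfl fun i _ => ?_
        rw [hsplit (fun J => x' J (fun k' => i k'.1)),
          hsplit (fun J => xa a J (fun k' => i k'.1)),
          hx'1, hx'2, Finset.prod_congr rfl (fun J hJE => hx'3 J (hEne J hJE).1 (hEne J hJE).2 _),
          Finset.prod_congr rfl (fun J hJE =>
            (modx_eval3 x hk1 hl2 a (hEne J hJE).1 (hEne J hJE).2 _).symm)]
        field_simp
        rfl
      have heq := (eq_div_iff (ne_of_gt (mul_pos hq1 hq2))).1 hsum'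
      calc (∑ i : Fin d → Fin n, A i * ∏ J ∈ P.parts, xa a J (fun k' => i k'.1))
          = (∑ i : Fin d → Fin n, A i * ∏ J ∈ P.parts, x' J (fun k' => i k'.1))
            * (Real.sqrt (s1 a) * Real.sqrt (s2 a)) := heq.symm
        _ ≤ normJ A P * (Real.sqrt (s1 a) * Real.sqrt (s2 a)) :=
            mul_le_mul_of_nonneg_right hle (le_of_lt (mul_pos hq1 hq2))
    have hCS : ∑ a : Fin n, Real.sqrt (s1 a) * Real.sqrt (s2 a) ≤ 1 := by
      have h := Finset.sum_sq_le_sum_mul_sum_of_sq_eq_mul Finset.univ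
        (r := fun a => Real.sqrt (s1 a) * Real.sqrt (s2 a)) (f := s1) (g := s2)
        (fun a _ => hs1nn a) (fun a _ => hs2nn a)
        (fun a _ => by rw [mul_pow, Real.sq_sqrt (hs1nn a), Real.sq_sqrt (hs2nn a)])
      have hnn : 0 ≤ ∑ a : Fin n, Real.sqrt (s1 a) * Real.sqrt (s2 a) :=
        Finset.sum_nonneg fun a _ => mul_nonneg (Real.sqrt_nonneg _) (Real.sqrt_nonneg _)
      nlinarith [hs1sum, hs2sum, Finset.sum_nonneg (fun (a : Fin n) (_ : a ∈ Finset.univ) => hs1nn a),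
        Finset.sum_nonneg (fun (a : Fin n) (_ : a ∈ Finset.univ) => hs2nn a)]
    calc ∑ i : Fin d → Fin n,
          (fun i => if i k = i l then A i else 0) i * ∏ J ∈ P.parts, x J (fun k' => i k'.1)
        = ∑ a : Fin n, ∑ i : Fin d → Fin n,
            A i * ∏ J ∈ P.parts, xa a J (fun k' => i k'.1) := decomp
      _ ≤ ∑ a : Fin n, normJ A P * (Real.sqrt (s1 a) * Real.sqrt (s2 a)) :=
          Finset.sum_le_sum fun a _ => key a
      _ = normJ A P * ∑ a : Fin n, Real.sqrt (s1 a) * Real.sqrt (s2 a) := by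
          rw [Finset.mul_sum]
      _ ≤ normJ A P * 1 := mul_le_mul_of_nonneg_left hCS (normJ_nonneg A P hPne)
      _ = normJ A P := mul_one _

lemma normJ_set_pairs_le (A : (Fin d → Fin n) → ℝ)
    (P : Finpartition (Finset.univ : Finset (Fin d))) (s : Finset (Fin d × Fin d)) :
    normJ (fun i => if ∀ p ∈ s, i p.1 = i p.2 then A i else 0) P ≤ normJ A P := by
  classical
  induction s using Finset.induction generalizing A with
  | empty => simp
  | insert q s hq ih =>
    have hfun : (fun i => if ∀ p ∈ insert q s, i p.1 = i p.2 then A i else 0)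
        = fun i => if i q.1 = i q.2 then
            (if ∀ p ∈ s, i p.1 = i p.2 then A i else 0) else 0 := by
      funext i
      simp only [Finset.forall_mem_insert]
      split_ifs with h1 h2 h3 h4 <;> tauto
    rw [hfun]
    exact le_trans (normJ_pair_le _ P q.1 q.2) (ih A)

lemma normJ_negpow_le (A : (Fin d → Fin n) → ℝ)
    (P : Finpartition (Finset.univ : Finset (Fin d))) (m : ℕ) (hP : P.parts.Nonempty) :
    normJ (fun i => (-1 : ℝ)^m * A i) P ≤ normJ A P := by
  rcases Nat.even_or_odd m with h | h
  · rw [h.neg_one_pow]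
    simp only [one_mul]
    exact le_rfl
  · rw [h.neg_one_pow]
    simp only [neg_one_mul]
    exact normJ_neg_le A P hP

def repF (K : Finpartition (Finset.univ : Finset (Fin d))) (k : Fin d) : Fin d :=
  (K.part k).min' ⟨k, K.mem_part (Finset.mem_univ k)⟩

lemma repF_mem (K : Finpartition (Finset.univ : Finset (Fin d))) (k : Fin d) :
    repF K k ∈ K.part k := Finset.min'_mem _ _

lemma part_repF (K : Finpartition (Finset.univ : Finset (Fin d))) (k : Fin d) :
    K.part (repF K k) = K.part k :=
  K.part_eq_of_mem (K.part_mem.2 (Finset.mem_univ k)) (repF_mem K k)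

lemma repF_eq (K : Finpartition (Finset.univ : Finset (Fin d))) {k l : Fin d}
    (h : K.part k = K.part l) : repF K k = repF K l := by
  unfold repF
  congr 1

lemma repF_idem (K : Finpartition (Finset.univ : Finset (Fin d))) (k : Fin d) :
    repF K (repF K k) = repF K k := repF_eq K (part_repF K k)

lemma samePart_iff (K : Finpartition (Finset.univ : Finset (Fin d))) (k l : Fin d) :
    (∃ B ∈ K.parts, k ∈ B ∧ l ∈ B) ↔ K.part k = K.part l := by
  constructor
  · rintro ⟨B, hB, hk, hl⟩
    rw [K.part_eq_of_mem hB hk, K.part_eq_of_mem hB hl]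
  · intro h
    exact ⟨K.part k, K.part_mem.2 (Finset.mem_univ k), K.mem_part (Finset.mem_univ k),
      h.symm ▸ K.mem_part (Finset.mem_univ l)⟩

lemma samePart_rep (K : Finpartition (Finset.univ : Finset (Fin d))) (k : Fin d) :
    ∃ B ∈ K.parts, k ∈ B ∧ repF K k ∈ B :=
  ⟨K.part k, K.part_mem.2 (Finset.mem_univ k), K.mem_part (Finset.mem_univ k), repF_mem K k⟩

def mnF (hd : 0 < d) (e : Finset (Fin d)) : Fin d :=
  if h : e.Nonempty then e.min' h else ⟨0, hd⟩

def mxF (hd : 0 < d) (e : Finset (Fin d)) : Fin d :=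
  if h : e.Nonempty then e.max' h else ⟨0, hd⟩

lemma mnF_mem (hd : 0 < d) {e : Finset (Fin d)} (h : e.Nonempty) : mnF hd e ∈ e := by
  rw [mnF, dif_pos h]; exact Finset.min'_mem _ _

lemma mxF_mem (hd : 0 < d) {e : Finset (Fin d)} (h : e.Nonempty) : mxF hd e ∈ e := by
  rw [mxF, dif_pos h]; exact Finset.max'_mem _ _

lemma mnF_ne_mxF (hd : 0 < d) {e : Finset (Fin d)} (h : 1 < e.card) : mnF hd e ≠ mxF hd e := by
  have hne : e.Nonempty := Finset.card_pos.1 (by omega)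
  rw [mnF, mxF, dif_pos hne, dif_pos hne]
  exact ne_of_lt (Finset.min'_lt_max'_of_card e h)


end Aux

/-- For a partition `𝒦` of `[d]`, let `L(𝒦)` be the set of indices `i ∈ [n]^d` whose
partition into level sets is exactly `𝒦` (i.e. `i_k = i_l` iff `k, l` lie in the same
block of `𝒦`). Then `‖A ∘ 1_{L(𝒦)}‖_𝒥 ≤ 2^{#𝒦(#𝒦-1)/2} ‖A‖_𝒥`. -/
theorem stmt2 (n d : ℕ) (A : (Fin d → Fin n) → ℝ)
    (K P : Finpartition (Finset.univ : Finset (Fin d))) :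
    normJ (fun i =>
        if ∀ k l : Fin d, i k = i l ↔ ∃ B ∈ K.parts, k ∈ B ∧ l ∈ B then A i else 0) P ≤
      2 ^ (K.parts.card * (K.parts.card - 1) / 2) * normJ A P := by
  classical
  by_cases hd : d = 0
  · subst hd
    have hfun : (fun i : Fin 0 → Fin n =>
        if ∀ k l : Fin 0, i k = i l ↔ ∃ B ∈ K.parts, k ∈ B ∧ l ∈ B then A i else 0) = A := by
      funext i
      rw [if_pos]
      intro k
      exact k.elim0
    have hK : K.parts = ∅ := by
      rw [Finset.eq_empty_iff_forall_notMem]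
      intro B hB
      obtain ⟨b, _⟩ := K.nonempty_of_mem_parts hB
      exact b.elim0
    rw [hfun, hK]
    norm_num
  have hd0 : 0 < d := Nat.pos_of_ne_zero hd
  have hPne : P.parts.Nonempty := by
    refine P.parts_nonempty fun hbot => ?_
    have hx0 : (⟨0, hd0⟩ : Fin d) ∈ (Finset.univ : Finset (Fin d)) := Finset.mem_univ _
    rw [hbot, Finset.bot_eq_empty] at hx0
    exact absurd hx0 (Finset.notMem_empty _)
  set R : Finset (Fin d) := Finset.univ.image (repF K) with hRdef
  set PS : Finset (Finset (Fin d)) := R.powersetCard 2 with hPSdef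
  -- the pointwise inclusion-exclusion identity
  have hpoint : ∀ i : Fin d → Fin n,
      (if ∀ k l : Fin d, i k = i l ↔ ∃ B ∈ K.parts, k ∈ B ∧ l ∈ B then A i else 0)
      = ∑ T ∈ PS.powerset, (-1 : ℝ)^T.card *
          (if (∀ k, i k = i (repF K k)) ∧ ∀ e ∈ T, i (mnF hd0 e) = i (mxF hd0 e)
            then A i else 0) := by
    intro i
    set g : Finset (Fin d) → ℝ := fun e => if i (mnF hd0 e) = i (mxF hd0 e) then 1 else 0
      with hgdef
    have hsplitT : ∀ T ∈ PS.powerset,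
        (-1 : ℝ)^T.card * (if (∀ k, i k = i (repF K k)) ∧
            ∀ e ∈ T, i (mnF hd0 e) = i (mxF hd0 e) then A i else 0)
        = (if ∀ k, i k = i (repF K k) then A i else 0) * ((-1 : ℝ)^T.card * ∏ e ∈ T, g e) := by
      intro T _
      by_cases hE : ∀ k, i k = i (repF K k)
      · by_cases hT : ∀ e ∈ T, i (mnF hd0 e) = i (mxF hd0 e)
        · rw [if_pos ⟨hE, hT⟩, if_pos hE,
            Finset.prod_eq_one (fun e he => if_pos (hT e he))]
          ring
        · push_neg at hT
          obtain ⟨e, heT, hne⟩ := hT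
          have hge : g e = 0 := by rw [hgdef]; simp [hne]
          rw [if_neg (fun h => hne (h.2 e heT)), if_pos hE, Finset.prod_eq_zero heT hge]
          ring
      · rw [if_neg (fun h => hE h.1), if_neg hE]
        ring
    rw [Finset.sum_congr rfl hsplitT, ← Finset.mul_sum]
    have hIE : ∑ T ∈ PS.powerset, (-1 : ℝ)^T.card * ∏ e ∈ T, g e
        = ∏ e ∈ PS, (1 - g e) := by
      have h1 := Finset.prod_add (fun e => -g e) (fun _ => (1 : ℝ)) PS
      simp only [Finset.prod_const_one, mul_one] at h1
      have h2 : ∀ e ∈ PS, (1 : ℝ) - g e = -g e + 1 := fun e _ => by ring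
      rw [Finset.prod_congr rfl h2, h1]
      refine Finset.sum_congr rfl fun T _ => ?_
      rw [Finset.prod_congr rfl (fun e (_ : e ∈ T) => (neg_one_mul (g e)).symm),
        Finset.prod_mul_distrib, Finset.prod_const]
    rw [hIE]
    by_cases hP : ∀ k l : Fin d, i k = i l ↔ ∃ B ∈ K.parts, k ∈ B ∧ l ∈ B
    · rw [if_pos hP]
      have hE : ∀ k, i k = i (repF K k) := fun k => (hP k (repF K k)).2 (samePart_rep K k)
      rw [if_pos hE]
      have hone : ∀ e ∈ PS, (1 : ℝ) - g e = 1 := by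
        intro e he
        obtain ⟨hsub, hcard⟩ := Finset.mem_powersetCard.1 he
        have hcard1 : 1 < e.card := by omega
        have hene : e.Nonempty := Finset.card_pos.1 (by omega)
        have hne := mnF_ne_mxF hd0 hcard1
        have hmnR : mnF hd0 e ∈ R := hsub (mnF_mem hd0 hene)
        have hmxR : mxF hd0 e ∈ R := hsub (mxF_mem hd0 hene)
        obtain ⟨k1, _, hk1⟩ := Finset.mem_image.1 hmnR
        obtain ⟨k2, _, hk2⟩ := Finset.mem_image.1 hmxR
        have hdiff : ¬ i (mnF hd0 e) = i (mxF hd0 e) := by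
          intro heq
          have hsp := (hP _ _).1 heq
          have hpp := (samePart_iff K _ _).1 hsp
          apply hne
          calc mnF hd0 e = repF K (mnF hd0 e) := by rw [← hk1, repF_idem]
            _ = repF K (mxF hd0 e) := repF_eq K hpp
            _ = mxF hd0 e := by rw [← hk2, repF_idem]
        rw [hgdef]
        simp [hdiff]
      rw [Finset.prod_congr rfl hone, Finset.prod_const_one, mul_one]
    · rw [if_neg hP, eq_comm]
      by_cases hE : ∀ k, i k = i (repF K k)
      · have hNE : ∃ k l, i k = i l ∧ ¬(∃ B ∈ K.parts, k ∈ B ∧ l ∈ B) := by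
          by_contra hcon
          push_neg at hcon
          apply hP
          intro k l
          constructor
          · intro h
            exact hcon k l h
          · intro h
            have hpp := (samePart_iff K _ _).1 h
            rw [hE k, hE l, repF_eq K hpp]
        obtain ⟨k, l, hkl, hnb⟩ := hNE
        have hab : repF K k ≠ repF K l := by
          intro h
          apply hnb
          refine (samePart_iff K k l).2 ?_
          rw [← part_repF K k, h, part_repF K l]
        have hia : i (repF K k) = i (repF K l) := by
          rw [← hE k, ← hE l]; exact hkl
        have hePS : ({repF K k, repF K l} : Finset (Fin d)) ∈ PS := by
          refine Finset.mem_powersetCard.2 ⟨?_, ?_⟩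
          · refine Finset.insert_subset ?_ (Finset.singleton_subset_iff.2 ?_)
            · exact Finset.mem_image_of_mem _ (Finset.mem_univ k)
            · exact Finset.mem_image_of_mem _ (Finset.mem_univ l)
          · rw [Finset.card_insert_of_notMem (by simpa using hab), Finset.card_singleton]
        have hzero : (1 : ℝ) - g ({repF K k, repF K l} : Finset (Fin d)) = 0 := by
          have hene : ({repF K k, repF K l} : Finset (Fin d)).Nonempty :=
            ⟨repF K k, Finset.mem_insert_self _ _⟩
          have hmn := mnF_mem hd0 hene
          have hmx := mxF_mem hd0 hene
          have hne := mnF_ne_mxF hd0 (e := {repF K k, repF K l})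
            (by rw [Finset.card_insert_of_notMem (by simpa using hab)]; simp)
          have : i (mnF hd0 ({repF K k, repF K l} : Finset (Fin d)))
              = i (mxF hd0 ({repF K k, repF K l} : Finset (Fin d))) := by
            rcases Finset.mem_insert.1 hmn with h1 | h1 <;>
              rcases Finset.mem_insert.1 hmx with h2 | h2
            · exact absurd (h1.trans h2.symm) hne
            · rw [h1, Finset.mem_singleton.1 h2]; exact hia
            · rw [Finset.mem_singleton.1 h1, h2]; exact hia.symm
            · exact absurd ((Finset.mem_singleton.1 h1).trans
                (Finset.mem_singleton.1 h2).symm) hne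
          rw [hgdef]
          simp [this]
        rw [Finset.prod_eq_zero hePS hzero, mul_zero]
      · rw [if_neg hE, zero_mul]
  -- rewrite the goal function
  have hfun : (fun i : Fin d → Fin n =>
      if ∀ k l : Fin d, i k = i l ↔ ∃ B ∈ K.parts, k ∈ B ∧ l ∈ B then A i else 0)
      = fun i => ∑ T ∈ PS.powerset, (-1 : ℝ)^T.card *
          (if (∀ k, i k = i (repF K k)) ∧ ∀ e ∈ T, i (mnF hd0 e) = i (mxF hd0 e)
            then A i else 0) := funext hpoint
  rw [hfun]
  have hterm : ∀ T ∈ PS.powerset, normJ (fun i => (-1 : ℝ)^T.card *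
      (if (∀ k, i k = i (repF K k)) ∧ ∀ e ∈ T, i (mnF hd0 e) = i (mxF hd0 e)
        then A i else 0)) P ≤ normJ A P := by
    intro T _
    refine le_trans (normJ_negpow_le _ P T.card hPne) ?_
    set sT : Finset (Fin d × Fin d) :=
      (Finset.univ.image fun k => (k, repF K k)) ∪ (T.image fun e => (mnF hd0 e, mxF hd0 e))
      with hsTdef
    have hcond : ∀ i : Fin d → Fin n,
        (∀ p ∈ sT, i p.1 = i p.2) ↔
          ((∀ k, i k = i (repF K k)) ∧ ∀ e ∈ T, i (mnF hd0 e) = i (mxF hd0 e)) := by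
      intro i
      constructor
      · intro h
        refine ⟨fun k => h (k, repF K k)
          (Finset.mem_union_left _ (Finset.mem_image_of_mem _ (Finset.mem_univ k))),
          fun e he => h (mnF hd0 e, mxF hd0 e)
          (Finset.mem_union_right _ (Finset.mem_image_of_mem _ he))⟩
      · rintro ⟨h1, h2⟩ p hp
        rcases Finset.mem_union.1 hp with hp | hp
        · obtain ⟨k, _, rfl⟩ := Finset.mem_image.1 hp
          exact h1 k
        · obtain ⟨e, he, rfl⟩ := Finset.mem_image.1 hp
          exact h2 e he
    have : (fun i : Fin d → Fin n =>
        if (∀ k, i k = i (repF K k)) ∧ ∀ e ∈ T, i (mnF hd0 e) = i (mxF hd0 e)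
          then A i else 0)
        = fun i => if ∀ p ∈ sT, i p.1 = i p.2 then A i else 0 := by
      funext i
      exact (if_congr (hcond i) rfl rfl).symm
    rw [this]
    exact normJ_set_pairs_le A P sT
  calc normJ (fun i => ∑ T ∈ PS.powerset, (-1 : ℝ)^T.card *
          (if (∀ k, i k = i (repF K k)) ∧ ∀ e ∈ T, i (mnF hd0 e) = i (mxF hd0 e)
            then A i else 0)) P
      ≤ ∑ T ∈ PS.powerset, normJ (fun i => (-1 : ℝ)^T.card *
          (if (∀ k, i k = i (repF K k)) ∧ ∀ e ∈ T, i (mnF hd0 e) = i (mxF hd0 e)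
            then A i else 0)) P :=
        normJ_sum_le P PS.powerset (fun T i => (-1 : ℝ)^T.card *
          (if (∀ k, i k = i (repF K k)) ∧ ∀ e ∈ T, i (mnF hd0 e) = i (mxF hd0 e)
            then A i else 0)) hPne
    _ ≤ ∑ T ∈ PS.powerset, normJ A P := Finset.sum_le_sum hterm
    _ = (2 ^ PS.card : ℝ) * normJ A P := by
        rw [Finset.sum_const, Finset.card_powerset, nsmul_eq_mul]
        norm_num
    _ ≤ 2 ^ (K.parts.card * (K.parts.card - 1) / 2) * normJ A P := by
        refine mul_le_mul_of_nonneg_right ?_ (normJ_nonneg A P hPne)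
        have hRcard : R.card ≤ K.parts.card := by
          refine Finset.card_le_card_of_injOn (fun a => K.part a)
            (fun a _ => K.part_mem.2 (Finset.mem_univ a)) ?_
          intro a ha b hb hab
          obtain ⟨k1, _, hk1⟩ := Finset.mem_image.1 ha
          obtain ⟨k2, _, hk2⟩ := Finset.mem_image.1 hb
          calc a = repF K a := by rw [← hk1, repF_idem]
            _ = repF K b := repF_eq K hab
            _ = b := by rw [← hk2, repF_idem]
        have hPScard : PS.card ≤ K.parts.card * (K.parts.card - 1) / 2 := by
          rw [hPSdef, Finset.card_powersetCard, ← Nat.choose_two_right]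
          exact Nat.choose_le_choose 2 hRcard
        calc (2 : ℝ) ^ PS.card ≤ 2 ^ (K.parts.card * (K.parts.card - 1) / 2) := by
              exact pow_le_pow_right₀ (by norm_num) hPScard
          _ = _ := rfl
end

section
/- Let $X$ be a random vector in $\mathbb{R}^n$ such that for some $L > 0$ and all $p \ge 2$ and all $\mathcal{C}^1$ functions $f:\mathbb{R}^n\to\mathbb{R}$ with $f(X), |\nabla f(X)| \in L^p$, one has $\|f(X) - \mathbb{E}f(X)\|_p \le L\sqrt{p}\,\||\nabla f(X)|\|_p$. Let $G$ be a standard Gaussian vector in $\mathbb{R}^n$ independent of $X$. Then there exists an absolute constant $C$ such that for all such $f$ and all $p \ge 2$, $\|f(X) - \mathbb{E}f(X)\|_p \le C L \|\langle \nabla f(X), G\rangle\|_p$, where the $L^p$ norm on the right is over the joint distribution of $(X,G)$. -/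
open MeasureTheory ProbabilityTheory

/-- `L^p` norm `‖Z‖_p = (𝔼 |Z|^p)^{1/p}` of a real random variable with respect to a
measure `μ`. -/
noncomputable def lpNorm {Ω : Type*} [MeasurableSpace Ω] (μ : Measure Ω) (p : ℝ)
    (Z : Ω → ℝ) : ℝ :=
  (∫ ω, |Z ω| ^ p ∂μ) ^ (1 / p)

/-- The `ψ_α` Orlicz norm `‖Z‖_{ψ_α} = inf{t > 0 : 𝔼 exp(|Z|^α / t^α) ≤ 2}`. -/
noncomputable def psiNorm {Ω : Type*} [MeasurableSpace Ω] (μ : Measure Ω) (α : ℝ)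
    (Z : Ω → ℝ) : ℝ :=
  sInf {t : ℝ | 0 < t ∧ ∫ ω, Real.exp (|Z ω| ^ α / t ^ α) ∂μ ≤ 2}

/-- The partial derivative `∂f/∂x_i` of `f : ℝⁿ → ℝ`. -/
noncomputable def pderivAt {n : ℕ} (f : (Fin n → ℝ) → ℝ) (i : Fin n)
    (x : Fin n → ℝ) : ℝ :=
  fderiv ℝ f x (Pi.single i 1)

/-- The Euclidean length `|∇f(x)|` of the gradient of `f : ℝⁿ → ℝ`. -/
noncomputable def gradNorm {n : ℕ} (f : (Fin n → ℝ) → ℝ) (x : Fin n → ℝ) : ℝ :=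
  Real.sqrt (∑ i, pderivAt f i x ^ 2)


section StmtAux

open scoped ENNReal NNReal Real

private lemma pdf_mul {v w : ℝ≥0} (hv : v ≠ 0) (hw : w ≠ 0) (x y : ℝ) :
    gaussianPDFReal 0 v x * gaussianPDFReal x w y =
      gaussianPDFReal 0 (v + w) y *
        gaussianPDFReal ((v : ℝ) * y / ((v : ℝ) + w) ) (NNReal.mk ((v : ℝ) * w / ((v : ℝ) + w)) (by positivity)) x := by
  have hv' : (0:ℝ) < v := lt_of_le_of_ne (v.coe_nonneg) (by exact_mod_cast (Ne.symm hv))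
  have hw' : (0:ℝ) < w := lt_of_le_of_ne (w.coe_nonneg) (by exact_mod_cast (Ne.symm hw))
  have hvw : (0:ℝ) < (v:ℝ) + w := by linarith
  simp only [gaussianPDFReal, NNReal.coe_mk, NNReal.coe_add]
  rw [mul_mul_mul_comm, mul_mul_mul_comm (Real.sqrt (2*π*((v:ℝ)+w)))⁻¹, ← Real.exp_add, ← Real.exp_add]
  congr 1
  · rw [← mul_inv, ← mul_inv, ← Real.sqrt_mul (by positivity), ← Real.sqrt_mul (by positivity)]
    congr 1
    field_simp
  · congr 1
    field_simp
    ring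

private lemma key_integral {v w : ℝ≥0} (hv : v ≠ 0) (hw : w ≠ 0) (y : ℝ) :
    ∫⁻ x, gaussianPDF 0 v x * gaussianPDF x w y = gaussianPDF 0 (v + w) y := by
  have hvw : ((v:ℝ) + w) ≠ 0 := by positivity
  have hu : (NNReal.mk ((v : ℝ) * w / ((v : ℝ) + w)) (by positivity) : ℝ≥0) ≠ 0 := by
    have hv' : (0:ℝ) < v := lt_of_le_of_ne (v.coe_nonneg) (by exact_mod_cast (Ne.symm hv))
    have hw' : (0:ℝ) < w := lt_of_le_of_ne (w.coe_nonneg) (by exact_mod_cast (Ne.symm hw))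
    intro h
    rw [← NNReal.coe_eq_zero] at h
    simp only [NNReal.coe_mk] at h
    have : (0:ℝ) < (v:ℝ) * w / ((v:ℝ) + w) := by positivity
    linarith [this, h.le]
  simp only [gaussianPDF]
  have h1 : ∀ x : ℝ, ENNReal.ofReal (gaussianPDFReal 0 v x) * ENNReal.ofReal (gaussianPDFReal x w y)
      = ENNReal.ofReal (gaussianPDFReal 0 (v+w) y) *
        ENNReal.ofReal (gaussianPDFReal ((v : ℝ) * y / ((v : ℝ) + w))
          (NNReal.mk ((v : ℝ) * w / ((v : ℝ) + w)) (by positivity)) x) := by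
    intro x
    rw [← ENNReal.ofReal_mul (gaussianPDFReal_nonneg _ _ _),
      ← ENNReal.ofReal_mul (gaussianPDFReal_nonneg _ _ _), pdf_mul hv hw]
  simp_rw [h1]
  rw [lintegral_const_mul _ (measurable_gaussianPDFReal _ _).ennreal_ofReal,
    lintegral_gaussianPDFReal_eq_one _ hu, mul_one]

private lemma hunc (w : ℝ≥0) : Measurable (fun p : ℝ × ℝ => gaussianPDF p.1 w p.2) := by
  apply Measurable.ennreal_ofReal
  unfold gaussianPDFReal
  fun_prop

private lemma gauss_conv (v w : ℝ≥0) :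
    ((gaussianReal 0 v).prod (gaussianReal 0 w)).map (fun p : ℝ × ℝ => p.1 + p.2)
      = gaussianReal 0 (v + w) := by
  by_cases hv : v = 0
  · subst hv
    rw [gaussianReal_zero_var, Measure.dirac_prod,
      Measure.map_map measurable_add measurable_prodMk_left, zero_add]
    convert Measure.map_id
    ext x; simp
  by_cases hw : w = 0
  · subst hw
    rw [gaussianReal_zero_var, Measure.prod_dirac,
      Measure.map_map measurable_add
        measurable_prodMk_right,
      add_zero]
    convert Measure.map_id
    ext x; simp [Function.comp]
  have hvw : v + w ≠ 0 := by simp [hv]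
  ext s hs
  rw [Measure.map_apply measurable_add hs, Measure.prod_apply (measurable_add hs)]
  have h2 : ∀ x : ℝ, gaussianReal 0 w (Prod.mk x ⁻¹' ((fun p : ℝ × ℝ => p.1 + p.2) ⁻¹' s))
      = ∫⁻ y in s, gaussianPDF x w y := by
    intro x
    have hpre : Prod.mk x ⁻¹' ((fun p : ℝ × ℝ => p.1 + p.2) ⁻¹' s) = (x + ·) ⁻¹' s := rfl
    rw [hpre, ← Measure.map_apply (measurable_const_add x) hs, gaussianReal_map_const_add,
      zero_add, gaussianReal_of_var_ne_zero _ hw, withDensity_apply _ hs]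
  simp_rw [h2]
  have hinner : Measurable fun x : ℝ => ∫⁻ y in s, gaussianPDF x w y := by
    apply Measurable.lintegral_prod_right (f := fun x y => gaussianPDF x w y)
    exact hunc w
  rw [gaussianReal_of_var_ne_zero _ hv,
    lintegral_withDensity_eq_lintegral_mul _ (measurable_gaussianPDF _ _) hinner]
  have h3 : ∀ x : ℝ, ((gaussianPDF 0 v) * fun x => ∫⁻ y in s, gaussianPDF x w y) x
      = ∫⁻ y in s, gaussianPDF 0 v x * gaussianPDF x w y := by
    intro x
    simp only [Pi.mul_apply]
    exact (lintegral_const_mul _ ((hunc w).comp measurable_prodMk_left)).symm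
  simp_rw [h3]
  rw [lintegral_lintegral_swap]
  · simp_rw [key_integral hv hw]
    rw [gaussianReal_of_var_ne_zero _ hvw, withDensity_apply _ hs]
  · exact (((measurable_gaussianPDF 0 v).comp measurable_fst).mul
      ((hunc w).comp (measurable_fst.prodMk measurable_snd : Measurable fun p : ℝ × ℝ => (p.1, p.2)))).aemeasurable

private lemma map_add_gauss {Ω : Type*} [MeasurableSpace Ω] {μ : Measure Ω} [IsProbabilityMeasure μ]
    {X Y : Ω → ℝ} (hX : Measurable X) (hY : Measurable Y) (h : ProbabilityTheory.IndepFun X Y μ)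
    {v w : ℝ≥0} (hXl : μ.map X = gaussianReal 0 v) (hYl : μ.map Y = gaussianReal 0 w) :
    μ.map (fun ω => X ω + Y ω) = gaussianReal 0 (v + w) := by
  have hmap := (ProbabilityTheory.indepFun_iff_map_prod_eq_prod_map_map hX.aemeasurable
    hY.aemeasurable).mp h
  have hcomp : (fun ω => X ω + Y ω) = (fun p : ℝ × ℝ => p.1 + p.2) ∘ (fun ω => (X ω, Y ω)) := rfl
  rw [hcomp, ← Measure.map_map measurable_add (hX.prodMk hY), hmap, hXl, hYl, gauss_conv]

private lemma sum_law {Ω' : Type*} [MeasurableSpace Ω'] {μ' : Measure Ω'} [IsProbabilityMeasure μ'] {n : ℕ}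
    {G : Fin n → Ω' → ℝ} (hG : ∀ i, Measurable (G i))
    (hind : iIndepFun G μ')
    (hlaw : ∀ i, μ'.map (G i) = gaussianReal 0 1) (a : Fin n → ℝ) :
    μ'.map (fun ω => ∑ i, a i * G i ω)
      = gaussianReal 0 (∑ i, (NNReal.mk (a i ^ 2) (sq_nonneg _) : ℝ≥0)) := by
  set f : Fin n → Ω' → ℝ := fun i ω => a i * G i ω with hf
  have hfm : ∀ i, Measurable (f i) := fun i => (hG i).const_mul (a i)
  have hfind : iIndepFun f μ' := by
    have := hind.comp (fun i (x : ℝ) => a i * x) (fun i => measurable_const_mul (a i))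
    exact this
  have hflaw : ∀ i, μ'.map (f i) = gaussianReal 0 (NNReal.mk (a i ^ 2) (sq_nonneg _) : ℝ≥0) := by
    intro i
    have : f i = (fun x => a i * x) ∘ G i := rfl
    rw [this, ← Measure.map_map (measurable_const_mul (a i)) (hG i), hlaw i,
      gaussianReal_map_const_mul, mul_zero, mul_one]
  have key : ∀ s : Finset (Fin n), μ'.map (fun ω => ∑ i ∈ s, f i ω)
      = gaussianReal 0 (∑ i ∈ s, (NNReal.mk (a i ^ 2) (sq_nonneg _) : ℝ≥0)) := by
    intro s
    induction s using Finset.induction_on with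
    | empty =>
      simp only [Finset.sum_empty]
      rw [Measure.map_const, measure_univ, one_smul, ← gaussianReal_zero_var]
    | @insert j s hj' ih =>
      have hsum : (fun ω => ∑ i ∈ insert j s, f i ω)
          = fun ω => f j ω + ∑ i ∈ s, f i ω := by
        ext ω; exact Finset.sum_insert hj'
      have hindep : ProbabilityTheory.IndepFun (f j) (fun ω => ∑ i ∈ s, f i ω) μ' := by
        have h1 := (hfind.indepFun_finsetSum_of_notMem hfm hj').symm
        have : (∑ i ∈ s, f i) = fun ω => ∑ i ∈ s, f i ω := by
          ext ω; simp [Finset.sum_apply]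
        rwa [this] at h1
      rw [hsum, Finset.sum_insert hj',
        map_add_gauss (hfm j) (by exact Finset.measurable_sum s (fun i _ => hfm i)) hindep
          (hflaw j) ih]
  have := key Finset.univ
  simpa only [hf] using this

private lemma gradNorm_nonneg {n : ℕ} (f : (Fin n → ℝ) → ℝ) (x : Fin n → ℝ) :
    0 ≤ gradNorm f x := Real.sqrt_nonneg _

private noncomputable def Mm (p : ℝ) : ℝ≥0∞ := ∫⁻ x, ENNReal.ofReal (|x| ^ p) ∂(gaussianReal 0 1)

private lemma gauss_scale (p : ℝ) (hp : 0 ≤ p) (v : ℝ≥0) :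
    ∫⁻ x, ENNReal.ofReal (|x| ^ p) ∂(gaussianReal 0 v)
      = ENNReal.ofReal (Real.sqrt v ^ p) * Mm p := by
  have hmap : (gaussianReal 0 1).map ((Real.sqrt v : ℝ) * ·) = gaussianReal 0 v := by
    rw [gaussianReal_map_const_mul, mul_zero]
    congr
    rw [mul_one]
    ext
    simp [Real.sq_sqrt (v.coe_nonneg)]
  rw [← hmap, lintegral_map (by fun_prop) (measurable_const_mul _)]
  unfold Mm
  rw [← lintegral_const_mul _ (by fun_prop)]
  congr 1
  ext x
  rw [← ENNReal.ofReal_mul (by positivity), abs_mul, abs_of_nonneg (Real.sqrt_nonneg _),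
    Real.mul_rpow (Real.sqrt_nonneg _) (abs_nonneg _)]

private lemma abs_rpow_le_exp (p x : ℝ) (hp : 0 ≤ p) : |x| ^ p ≤ Real.exp (x ^ 2 / 4 + p ^ 2) := by
  rcases le_or_gt (|x|) 1 with h | h
  · calc |x| ^ p ≤ 1 := Real.rpow_le_one (abs_nonneg _) h hp
    _ ≤ Real.exp (x ^ 2 / 4 + p ^ 2) := Real.one_le_exp (by positivity)
  · have hx : (0:ℝ) < |x| := by linarith
    rw [← Real.exp_log (x := |x| ^ p) (by positivity), Real.exp_le_exp,
      Real.log_rpow hx]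
    have hlog : Real.log |x| ≤ |x| := (Real.log_le_sub_one_of_pos hx).trans (by linarith)
    have h2 : p * |x| ≤ x ^ 2 / 4 + p ^ 2 := by
      nlinarith [sq_nonneg (|x| / 2 - p), sq_abs x]
    calc p * Real.log |x| ≤ p * |x| := by nlinarith
    _ ≤ x ^ 2 / 4 + p ^ 2 := h2

private lemma Mm_lt_top (p : ℝ) (hp : 0 ≤ p) : Mm p < ∞ := by
  unfold Mm
  rw [gaussianReal_of_var_ne_zero _ one_ne_zero,
    lintegral_withDensity_eq_lintegral_mul _ (measurable_gaussianPDF _ _) (by fun_prop)]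
  have hb : ∀ x : ℝ, (gaussianPDF 0 1 * fun x => ENNReal.ofReal (|x| ^ p)) x
      ≤ ENNReal.ofReal ((Real.sqrt (2 * π))⁻¹ * Real.exp (p ^ 2) * Real.exp (-(4⁻¹) * x ^ 2)) := by
    intro x
    simp only [Pi.mul_apply, gaussianPDF]
    rw [← ENNReal.ofReal_mul (gaussianPDFReal_nonneg _ _ _)]
    apply ENNReal.ofReal_le_ofReal
    unfold gaussianPDFReal
    push_cast
    simp only [mul_one, sub_zero]
    have h1 : |x| ^ p ≤ Real.exp (x ^ 2 / 4 + p ^ 2) := abs_rpow_le_exp p x hp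
    calc (Real.sqrt (2 * π))⁻¹ * Real.exp (-(x) ^ 2 / 2) * |x| ^ p
        ≤ (Real.sqrt (2 * π))⁻¹ * Real.exp (-(x) ^ 2 / 2) * Real.exp (x ^ 2 / 4 + p ^ 2) :=
          mul_le_mul_of_nonneg_left h1 (by positivity)
      _ = (Real.sqrt (2 * π))⁻¹ * Real.exp (p ^ 2) * Real.exp (-(4⁻¹) * x ^ 2) := by
          have harg : -(x) ^ 2 / 2 + (x ^ 2 / 4 + p ^ 2) = p ^ 2 + -(4⁻¹) * x ^ 2 := by ring
          rw [mul_assoc, ← Real.exp_add, harg, Real.exp_add, ← mul_assoc]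
  calc ∫⁻ x, (gaussianPDF 0 1 * fun x => ENNReal.ofReal (|x| ^ p)) x
      ≤ ∫⁻ x, ENNReal.ofReal ((Real.sqrt (2 * π))⁻¹ * Real.exp (p ^ 2) * Real.exp (-(4⁻¹) * x ^ 2)) :=
        lintegral_mono hb
    _ = ENNReal.ofReal (∫ x, (Real.sqrt (2 * π))⁻¹ * Real.exp (p ^ 2) * Real.exp (-(4⁻¹) * x ^ 2)) := by
        rw [← ofReal_integral_eq_lintegral_ofReal]
        · exact (integrable_exp_neg_mul_sq (by norm_num : (0:ℝ) < 4⁻¹)).const_mul _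
        · exact Filter.Eventually.of_forall fun x => by positivity
    _ < ∞ := ENNReal.ofReal_lt_top

private lemma Mm_ge (p : ℝ) (hp : 2 ≤ p) :
    ENNReal.ofReal ((Real.sqrt p / 16) ^ p) ≤ Mm p := by
  have hp0 : (0:ℝ) < p := by linarith
  have hsp : (0:ℝ) ≤ Real.sqrt p := Real.sqrt_nonneg p
  unfold Mm
  rw [gaussianReal_of_var_ne_zero _ one_ne_zero,
    lintegral_withDensity_eq_lintegral_mul _ (measurable_gaussianPDF _ _) (by fun_prop)]
  set c : ℝ := (Real.sqrt (2 * π))⁻¹ * Real.exp (-(Real.sqrt p + 1) ^ 2 / 2) * Real.sqrt p ^ p with hc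
  have hpt : ∀ x ∈ Set.Icc (Real.sqrt p) (Real.sqrt p + 1),
      ENNReal.ofReal c ≤ (gaussianPDF 0 1 * fun x => ENNReal.ofReal (|x| ^ p)) x := by
    intro x hx
    obtain ⟨hx1, hx2⟩ := hx
    have hx0 : 0 ≤ x := le_trans hsp hx1
    simp only [Pi.mul_apply, gaussianPDF]
    rw [← ENNReal.ofReal_mul (gaussianPDFReal_nonneg _ _ _)]
    apply ENNReal.ofReal_le_ofReal
    unfold gaussianPDFReal
    push_cast
    simp only [mul_one, sub_zero]
    have h1 : Real.exp (-(Real.sqrt p + 1) ^ 2 / 2) ≤ Real.exp (-(x) ^ 2 / 2) := by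
      rw [Real.exp_le_exp]
      nlinarith
    have h2 : Real.sqrt p ^ p ≤ |x| ^ p := by
      rw [abs_of_nonneg hx0]
      exact Real.rpow_le_rpow hsp hx1 hp0.le
    have h3 : (0:ℝ) < (Real.sqrt (2 * π))⁻¹ := by positivity
    calc c = (Real.sqrt (2 * π))⁻¹ * Real.exp (-(Real.sqrt p + 1) ^ 2 / 2) * Real.sqrt p ^ p := hc
      _ ≤ (Real.sqrt (2 * π))⁻¹ * Real.exp (-(x) ^ 2 / 2) * |x| ^ p :=
          mul_le_mul (mul_le_mul_of_nonneg_left h1 h3.le) h2 (by positivity) (by positivity)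
  have key : Real.sqrt (2 * π) * Real.exp ((Real.sqrt p + 1) ^ 2 / 2) ≤ (16:ℝ) ^ p := by
    have hsq : (Real.sqrt p + 1) ^ 2 ≤ 4 * p := by
      have h1 : Real.sqrt p ≤ p := by
        calc Real.sqrt p ≤ Real.sqrt (p ^ 2) := Real.sqrt_le_sqrt (by nlinarith)
          _ = p := Real.sqrt_sq hp0.le
      have h2 : Real.sqrt p ^ 2 = p := Real.sq_sqrt hp0.le
      nlinarith
    have hexp : Real.exp ((Real.sqrt p + 1) ^ 2 / 2) ≤ (8:ℝ) ^ p := by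
      calc Real.exp ((Real.sqrt p + 1) ^ 2 / 2) ≤ Real.exp (2 * p) := by
            rw [Real.exp_le_exp]; linarith
        _ = Real.exp 2 ^ p := Real.exp_mul 2 p
        _ ≤ (8:ℝ) ^ p := by
            apply Real.rpow_le_rpow (Real.exp_pos 2).le _ hp0.le
            have h9 := Real.exp_one_lt_d9
            calc Real.exp 2 = Real.exp 1 * Real.exp 1 := by rw [← Real.exp_add]; norm_num
              _ ≤ 2.7182818286 * 2.7182818286 := by nlinarith [Real.exp_pos 1]
              _ ≤ 8 := by norm_num
    have hsqrt : Real.sqrt (2 * π) ≤ 3 := by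
      rw [show (3:ℝ) = Real.sqrt 9 by
        rw [show (9:ℝ) = 3 ^ 2 by norm_num, Real.sqrt_sq (by norm_num : (0:ℝ) ≤ 3)]]
      exact Real.sqrt_le_sqrt (by nlinarith [Real.pi_le_four])
    have h2p : (4:ℝ) ≤ 2 ^ p := by
      calc (4:ℝ) = 2 ^ (2:ℝ) := by
            rw [show ((2:ℝ) : ℝ) ^ (2:ℝ) = (2:ℝ) ^ (2:ℕ) by
              rw [← Real.rpow_natCast]; norm_num]
            norm_num
        _ ≤ 2 ^ p := (Real.rpow_le_rpow_left_iff (by norm_num)).mpr hp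
    calc Real.sqrt (2 * π) * Real.exp ((Real.sqrt p + 1) ^ 2 / 2)
        ≤ 3 * (8:ℝ) ^ p := mul_le_mul hsqrt hexp (Real.exp_pos _).le (by norm_num)
      _ ≤ 2 ^ p * 8 ^ p := by nlinarith [Real.rpow_nonneg (show (0:ℝ) ≤ 8 by norm_num) p]
      _ = (16:ℝ) ^ p := by rw [← Real.mul_rpow (by norm_num) (by norm_num)]; norm_num
  have hcge : (Real.sqrt p / 16) ^ p ≤ c := by
    rw [Real.div_rpow hsp (by norm_num), div_le_iff₀ (by positivity)]
    have h6 : (1:ℝ) / (16:ℝ) ^ p ≤ (Real.sqrt (2 * π))⁻¹ * Real.exp (-(Real.sqrt p + 1) ^ 2 / 2) := by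
      rw [neg_div, Real.exp_neg, one_div, ← mul_inv]
      exact inv_anti₀ (by positivity) key
    calc Real.sqrt p ^ p = (1 / (16:ℝ) ^ p) * Real.sqrt p ^ p * (16:ℝ) ^ p := by
          field_simp
      _ ≤ ((Real.sqrt (2 * π))⁻¹ * Real.exp (-(Real.sqrt p + 1) ^ 2 / 2)) * Real.sqrt p ^ p
            * (16:ℝ) ^ p := by
          apply mul_le_mul_of_nonneg_right
            (mul_le_mul_of_nonneg_right h6 (Real.rpow_nonneg hsp p))
            (Real.rpow_nonneg (by norm_num) p)
      _ = c * (16:ℝ) ^ p := by rw [hc]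
  calc ENNReal.ofReal ((Real.sqrt p / 16) ^ p)
      ≤ ENNReal.ofReal c := ENNReal.ofReal_le_ofReal hcge
    _ = ENNReal.ofReal c * volume (Set.Icc (Real.sqrt p) (Real.sqrt p + 1)) := by
        rw [Real.volume_Icc]
        norm_num
    _ = ∫⁻ x in Set.Icc (Real.sqrt p) (Real.sqrt p + 1), ENNReal.ofReal c := by
        rw [setLIntegral_const]
    _ ≤ ∫⁻ x in Set.Icc (Real.sqrt p) (Real.sqrt p + 1),
          (gaussianPDF 0 1 * fun x => ENNReal.ofReal (|x| ^ p)) x :=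
        setLIntegral_mono ((measurable_gaussianPDF 0 1).mul (Measurable.ennreal_ofReal (by fun_prop) : Measurable fun x : ℝ => ENNReal.ofReal (|x| ^ p))) hpt
    _ ≤ ∫⁻ x, (gaussianPDF 0 1 * fun x => ENNReal.ofReal (|x| ^ p)) x :=
        setLIntegral_le_lintegral _ _

end StmtAux

/-- Linearisation of a Sobolev-type inequality by an independent standard Gaussian
vector: if `X` satisfies `‖f(X) - 𝔼f(X)‖_p ≤ L √p ‖|∇f(X)|‖_p` for all `p ≥ 2` and all
`C¹` functions `f` with `f(X), |∇f(X)| ∈ L^p`, then for an absolute constant `C`, for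
all such `f` and `p ≥ 2`, `‖f(X) - 𝔼f(X)‖_p ≤ C L ‖⟨∇f(X), G⟩‖_p`, the norm on the
right being over the joint distribution of `(X, G)`. -/
theorem stmt7 :
    ∃ C : ℝ, 0 < C ∧
      ∀ (n : ℕ) (Ω : Type) (_ : MeasurableSpace Ω) (μ : Measure Ω)
        (_ : IsProbabilityMeasure μ)
        (Ω' : Type) (_ : MeasurableSpace Ω') (μ' : Measure Ω')
        (_ : IsProbabilityMeasure μ')
        (X : Ω → Fin n → ℝ) (G : Fin n → Ω' → ℝ) (L : ℝ), 0 < L →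
        Measurable X →
        (∀ i, Measurable (G i)) →
        iIndepFun G μ' →
        (∀ i, Measure.map (G i) μ' = gaussianReal 0 1) →
        (∀ p : ℝ, 2 ≤ p → ∀ f : (Fin n → ℝ) → ℝ, ContDiff ℝ 1 f →
          MemLp (fun ω => f (X ω)) (ENNReal.ofReal p) μ →
          MemLp (fun ω => gradNorm f (X ω)) (ENNReal.ofReal p) μ →
          lpNorm μ p (fun ω => f (X ω) - ∫ ω', f (X ω') ∂μ) ≤
            L * Real.sqrt p * lpNorm μ p (fun ω => gradNorm f (X ω))) →
        ∀ p : ℝ, 2 ≤ p → ∀ f : (Fin n → ℝ) → ℝ, ContDiff ℝ 1 f →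
          MemLp (fun ω => f (X ω)) (ENNReal.ofReal p) μ →
          MemLp (fun ω => gradNorm f (X ω)) (ENNReal.ofReal p) μ →
          lpNorm μ p (fun ω => f (X ω) - ∫ ω', f (X ω') ∂μ) ≤
            C * L *
              lpNorm (μ.prod μ') p
                (fun ω => ∑ i, pderivAt f i (X ω.1) * G i ω.2) := by
  refine ⟨16, by norm_num, ?_⟩
  intro n Ω mΩ μ hμ Ω' mΩ' μ' hμ' X G L hL hX hG hind hlaw hyp p hp f hf hmem1 hmem2
  have hp0 : (0:ℝ) < p := by linarith
  -- measurability of partial derivatives composed with X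
  have hpd : ∀ i : Fin n, Continuous (fun x => pderivAt f i x) := by
    intro i
    have hfd : Continuous (fderiv ℝ f) := hf.continuous_fderiv one_ne_zero
    exact (ContinuousLinearMap.apply ℝ ℝ (Pi.single i 1 : Fin n → ℝ)).continuous.comp hfd
  have ham : ∀ i : Fin n, Measurable fun ω => pderivAt f i (X ω) := fun i =>
    ((hpd i).measurable).comp hX
  have hgm : Measurable fun ω => gradNorm f (X ω) := by
    unfold gradNorm
    exact Real.continuous_sqrt.measurable.comp
      (Finset.measurable_sum _ (fun i _ => ((ham i).pow_const 2)))
  -- inner integral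
  have hinner : ∀ ω : Ω,
      (∫⁻ ω', ENNReal.ofReal (|∑ i, pderivAt f i (X ω) * G i ω'| ^ p) ∂μ')
        = ENNReal.ofReal (gradNorm f (X ω) ^ p) * Mm p := by
    intro ω
    have hS : Measurable (fun ω' => ∑ i, pderivAt f i (X ω) * G i ω') :=
      Finset.measurable_sum _ (fun i _ => (hG i).const_mul _)
    have habs : Measurable fun t : ℝ => ENNReal.ofReal (|t| ^ p) :=
      (measurable_id.abs.pow_const _).ennreal_ofReal
    rw [← lintegral_map habs hS, sum_law hG hind hlaw, gauss_scale p hp0.le]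
    congr 3
    unfold gradNorm
    congr 1
    push_cast
    rfl
  set Z : Ω × Ω' → ℝ := fun ω => ∑ i, pderivAt f i (X ω.1) * G i ω.2 with hZ
  have hZm : Measurable Z :=
    Finset.measurable_sum _ (fun i _ =>
      ((ham i).comp measurable_fst).mul ((hG i).comp measurable_snd))
  set I : ℝ := ∫ ω, gradNorm f (X ω) ^ p ∂μ with hI
  have hInn : 0 ≤ I := integral_nonneg fun ω => Real.rpow_nonneg (Real.sqrt_nonneg _) p
  have hint : Integrable (fun ω => gradNorm f (X ω) ^ p) μ := by
    have h0 := hmem2.integrable_norm_rpow (by simp [hp0]) ENNReal.ofReal_ne_top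
    rw [ENNReal.toReal_ofReal hp0.le] at h0
    refine h0.congr (Filter.Eventually.of_forall fun ω => ?_)
    show ‖gradNorm f (X ω)‖ ^ p = gradNorm f (X ω) ^ p
    rw [Real.norm_eq_abs, abs_of_nonneg (gradNorm_nonneg f _)]
  have hJ : (∫⁻ ω, ENNReal.ofReal (|Z ω| ^ p) ∂(μ.prod μ'))
      = Mm p * ENNReal.ofReal I := by
    rw [lintegral_prod _ ((by fun_prop : Measurable fun ω => ENNReal.ofReal (|Z ω| ^ p)).aemeasurable)]
    simp only [hZ]
    simp_rw [hinner]
    rw [lintegral_mul_const _ (by fun_prop : Measurable fun ω => ENNReal.ofReal (gradNorm f (X ω) ^ p)),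
      ← ofReal_integral_eq_lintegral_ofReal hint
        (Filter.Eventually.of_forall fun ω => Real.rpow_nonneg (Real.sqrt_nonneg _) p),
      mul_comm]
  -- identify the two lpNorms
  have hA : lpNorm μ p (fun ω => gradNorm f (X ω)) = I ^ (1/p) := by
    unfold _root_.lpNorm
    congr 1
    refine integral_congr_ae (Filter.Eventually.of_forall fun ω => ?_)
    simp only [abs_of_nonneg (gradNorm_nonneg f _)]
  have hB : lpNorm (μ.prod μ') p Z = ((Mm p).toReal) ^ (1/p) * I ^ (1/p) := by
    unfold _root_.lpNorm
    have h1 : (∫ ω, |Z ω| ^ p ∂(μ.prod μ'))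
        = ((∫⁻ ω, ENNReal.ofReal (|Z ω| ^ p) ∂(μ.prod μ'))).toReal := by
      rw [integral_eq_lintegral_of_nonneg_ae
        (Filter.Eventually.of_forall fun ω => Real.rpow_nonneg (abs_nonneg _) p)
        (by fun_prop : Measurable fun ω => |Z ω| ^ p).aestronglyMeasurable]
    rw [h1, hJ, ENNReal.toReal_mul, ENNReal.toReal_ofReal hInn,
      Real.mul_rpow ENNReal.toReal_nonneg hInn]
  -- lower bound on (Mm p).toReal ^ (1/p)
  have hrid : ((Real.sqrt p / 16) ^ p) ^ (1/p) = Real.sqrt p / 16 := by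
    rw [← Real.rpow_mul (by positivity), mul_one_div, div_self hp0.ne', Real.rpow_one]
  have hMlow : Real.sqrt p / 16 ≤ ((Mm p).toReal) ^ (1/p) := by
    have h1 : (Real.sqrt p / 16) ^ p ≤ (Mm p).toReal := by
      calc (Real.sqrt p / 16) ^ p
          = (ENNReal.ofReal ((Real.sqrt p / 16) ^ p)).toReal :=
            (ENNReal.toReal_ofReal (Real.rpow_nonneg (by positivity) p)).symm
        _ ≤ (Mm p).toReal := ENNReal.toReal_mono (Mm_lt_top p hp0.le).ne (Mm_ge p hp)
    calc Real.sqrt p / 16 = ((Real.sqrt p / 16) ^ p) ^ (1/p) := hrid.symm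
      _ ≤ ((Mm p).toReal) ^ (1/p) :=
          Real.rpow_le_rpow (Real.rpow_nonneg (by positivity) p) h1 (by positivity)
  -- conclude
  have hfinal := hyp p hp f hf hmem1 hmem2
  have hgnonneg : 0 ≤ lpNorm μ p (fun ω => gradNorm f (X ω)) := by
    rw [hA]; positivity
  calc lpNorm μ p (fun ω => f (X ω) - ∫ ω', f (X ω') ∂μ)
      ≤ L * Real.sqrt p * lpNorm μ p (fun ω => gradNorm f (X ω)) := hfinal
    _ ≤ L * (16 * ((Mm p).toReal) ^ (1/p)) * lpNorm μ p (fun ω => gradNorm f (X ω)) := by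
        apply mul_le_mul_of_nonneg_right _ hgnonneg
        apply mul_le_mul_of_nonneg_left _ hL.le
        rw [show (16:ℝ) * ((Mm p).toReal) ^ (1/p) = 16 * ((Mm p).toReal) ^ (1/p) from rfl]
        nlinarith [hMlow]
    _ = 16 * L * (((Mm p).toReal) ^ (1/p) * I ^ (1/p)) := by rw [hA]; ring
    _ = 16 * L * lpNorm (μ.prod μ') p Z := by rw [hB]
end

section
/- Let $\beta \ge 2$, $a, b \ge 0$, $g(\beta) \ge 0$, and suppose $G:[\beta,p]\to[0,\infty)$ is differentiable with $G(\beta) = g(\beta)^{\beta/2}$ and $G'(t) \le \frac{\beta}{2}\big(G(t)^{(\beta-2)/\beta} a + t^{\beta-2} b\big)$ for all $t \in [\beta,p]$. Then $G(p)^{2/\beta} \le g(\beta) + a(p-\beta) + b^{2/\beta} p^{2-2/\beta}$. -/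
open Set

/-- ODE comparison lemma: if `β ≥ 2`, `a, b ≥ 0`, `G : [β, p] → [0, ∞)` is
differentiable with `G(β) = g(β)^{β/2}` and
`G'(t) ≤ (β/2)(G(t)^{(β-2)/β} a + t^{β-2} b)` on `[β, p]`, then
`G(p)^{2/β} ≤ g(β) + a(p-β) + b^{2/β} p^{2-2/β}`. -/
theorem stmt9 (β p a b gβ : ℝ) (G G' : ℝ → ℝ)
    (hβ : 2 ≤ β) (hp : β ≤ p) (ha : 0 ≤ a) (hb : 0 ≤ b) (hgβ : 0 ≤ gβ)
    (hG0 : G β = gβ ^ (β / 2))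
    (hGnonneg : ∀ t ∈ Set.Icc β p, 0 ≤ G t)
    (hderiv : ∀ t ∈ Set.Icc β p, HasDerivAt G (G' t) t)
    (hbound : ∀ t ∈ Set.Icc β p,
      G' t ≤ β / 2 * (G t ^ ((β - 2) / β) * a + t ^ (β - 2) * b)) :
    G p ^ (2 / β) ≤ gβ + a * (p - β) + b ^ (2 / β) * p ^ (2 - 2 / β) := by
  have hβ0 : (0:ℝ) < β := by linarith
  have hc0 : 0 ≤ b ^ (2/β) := Real.rpow_nonneg hb _
  set c := b ^ (2/β) with hc
  have key : ∀ ε > (0:ℝ), G p ^ (2/β) ≤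
      gβ + a * (p-β) + c * p ^ (2-2/β) + ε * (1 + (p-β)) := by
    intro ε hε
    set φ : ℝ → ℝ := fun t => gβ + a*(t-β) + c*t^(2-2/β) + ε*(1+(t-β)) with hφ
    have hφpos : ∀ t ∈ Icc β p, 0 < φ t := by
      intro t ht
      have ht0 : 0 < t := lt_of_lt_of_le (by linarith) ht.1
      have h1 : 0 ≤ a*(t-β) := mul_nonneg ha (by linarith [ht.1])
      have h2 : 0 ≤ c*t^(2-2/β) := mul_nonneg hc0 (Real.rpow_nonneg ht0.le _)
      have h3 : 0 < ε*(1+(t-β)) := mul_pos hε (by linarith [ht.1])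
      simp only [hφ]; linarith
    set φ' : ℝ → ℝ := fun t => a + c*((2-2/β)*t^(1-2/β)) + ε with hφ'
    have hφderiv : ∀ t ∈ Icc β p, HasDerivAt φ (φ' t) t := by
      intro t ht
      have ht0 : 0 < t := lt_of_lt_of_le (by linarith) ht.1
      have h1 : HasDerivAt (fun s : ℝ => gβ + a*(s-β)) a t := by
        simpa using (((hasDerivAt_id t).sub_const β).const_mul a).const_add gβ
      have h2 : HasDerivAt (fun s : ℝ => c*s^(2-2/β)) (c*((2-2/β)*t^(1-2/β))) t := by
        have := (Real.hasDerivAt_rpow_const (x := t) (p := 2-2/β)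
          (Or.inl ht0.ne')).const_mul c
        simpa [show 2-2/β-1 = 1-2/β by ring] using this
      have h3 : HasDerivAt (fun s : ℝ => ε*(1+(s-β))) ε t := by
        simpa using (((hasDerivAt_id t).sub_const β).const_add 1).const_mul ε
      exact (h1.add h2).add h3
    set B : ℝ → ℝ := fun t => φ t ^ (β/2) with hB
    set B' : ℝ → ℝ := fun t => φ' t * (β/2) * φ t ^ (β/2-1) with hB'
    have hBderiv : ∀ t ∈ Icc β p, HasDerivAt B (B' t) t := fun t ht =>
      (hφderiv t ht).rpow_const (Or.inl (hφpos t ht).ne')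
    have hGB : ∀ x ∈ Icc β p, G x ≤ B x := by
      apply image_le_of_deriv_right_lt_deriv_boundary'
        (fun x hx => (hderiv x hx).continuousAt.continuousWithinAt)
        (fun x hx => (hderiv x (Ico_subset_Icc_self hx)).hasDerivWithinAt)
        ?_
        (fun x hx => (hBderiv x hx).continuousAt.continuousWithinAt)
        (fun x hx => (hBderiv x (Ico_subset_Icc_self hx)).hasDerivWithinAt)
        ?_
      · -- G β ≤ B β
        rw [hG0]
        have : gβ ≤ φ β := by
          have h2 : 0 ≤ c*β^(2-2/β) := mul_nonneg hc0 (Real.rpow_nonneg hβ0.le _)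
          simp only [hφ]; nlinarith
        exact Real.rpow_le_rpow hgβ this (by linarith)
      · -- strict inequality at crossing
        intro x hx heq
        have hx' : x ∈ Icc β p := Ico_subset_Icc_self hx
        have hx0 : 0 < x := lt_of_lt_of_le (by linarith) hx'.1
        have hφx := hφpos x hx'
        have h1 := hbound x hx'
        -- rewrite G x ^ ((β-2)/β)
        have hGx : G x ^ ((β-2)/β) = φ x ^ (β/2-1) := by
          rw [heq]
          show (φ x ^ (β/2)) ^ ((β-2)/β) = _
          rw [← Real.rpow_mul hφx.le]
          congr 1
          field_simp
        rw [hGx] at h1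
        -- key inequality : x^(β-2) * b ≤ φ x ^(β/2-1) * (c*((2-2/β)*x^(1-2/β)))
        have hkey : x ^ (β-2) * b ≤ φ x ^ (β/2-1) * (c*((2-2/β)*x^(1-2/β))) := by
          have hge : c * x^(2-2/β) ≤ φ x := by
            have h1' : 0 ≤ a*(x-β) := mul_nonneg ha (by linarith [hx'.1])
            have h3 : 0 ≤ ε*(1+(x-β)) := le_of_lt (mul_pos hε (by linarith [hx'.1]))
            simp only [hφ]; linarith
          have h2 : (c * x^(2-2/β)) ^ (β/2-1) ≤ φ x ^ (β/2-1) :=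
            Real.rpow_le_rpow (by positivity) hge (by linarith)
          have hsplit : (c * x^(2-2/β)) ^ (β/2-1)
              = b^((β-2)/β) * x^((2-2/β)*(β/2-1)) := by
            rw [Real.mul_rpow hc0 (Real.rpow_nonneg hx0.le _),
              ← Real.rpow_mul hx0.le, hc, ← Real.rpow_mul hb]
            congr 2
            field_simp
          have hbb : b^((β-2)/β) * c = b := by
            rw [hc, ← Real.rpow_add' hb (by rw [← add_div, sub_add_cancel, div_self hβ0.ne']; norm_num),
              show (β-2)/β + 2/β = 1 by field_simp; ring, Real.rpow_one]
          have hxx : x^((2-2/β)*(β/2-1)) * x^(1-2/β) = x^(β-2) := by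
            rw [← Real.rpow_add hx0]
            congr 1
            field_simp
            ring
          calc x ^ (β-2) * b
              = (b^((β-2)/β) * x^((2-2/β)*(β/2-1))) * (c * x^(1-2/β)) := by
                rw [show (b^((β-2)/β) * x^((2-2/β)*(β/2-1))) * (c * x^(1-2/β))
                  = (b^((β-2)/β) * c) * (x^((2-2/β)*(β/2-1)) * x^(1-2/β)) by ring,
                  hbb, hxx]; ring
            _ ≤ φ x ^ (β/2-1) * (c * x^(1-2/β)) := by
                apply mul_le_mul_of_nonneg_right (hsplit ▸ h2)
                  (mul_nonneg hc0 (Real.rpow_nonneg hx0.le _))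
            _ ≤ φ x ^ (β/2-1) * (c*((2-2/β)*x^(1-2/β))) := by
                apply mul_le_mul_of_nonneg_left _ (Real.rpow_nonneg hφx.le _)
                have h1β : (1:ℝ) ≤ 2-2/β := by
                  have : 2/β ≤ 1 := by
                    rw [div_le_one hβ0]; linarith
                  linarith
                nlinarith [Real.rpow_nonneg hx0.le (1-2/β), mul_nonneg hc0 (Real.rpow_nonneg hx0.le (1-2/β))]
        have hεpos : 0 < ε * φ x ^ (β/2-1) :=
          mul_pos hε (Real.rpow_pos_of_pos hφx _)
        calc G' x ≤ β/2 * (φ x ^ (β/2-1) * a + x^(β-2)*b) := h1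
          _ ≤ β/2 * (φ x ^ (β/2-1) * a + φ x ^ (β/2-1) * (c*((2-2/β)*x^(1-2/β)))) := by
              apply mul_le_mul_of_nonneg_left _ (by linarith)
              linarith
          _ < B' x := by
              simp only [hB', hφ']
              nlinarith
    have hGp : G p ≤ B p := hGB p (right_mem_Icc.2 hp)
    have : G p ^ (2/β) ≤ B p ^ (2/β) :=
      Real.rpow_le_rpow (hGnonneg p (right_mem_Icc.2 hp)) hGp (by positivity)
    calc G p ^ (2/β) ≤ B p ^ (2/β) := this
      _ = φ p ^ ((β/2)*(2/β)) := by
          rw [hB, ← Real.rpow_mul (hφpos p (right_mem_Icc.2 hp)).le]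
      _ = φ p := by
          rw [show (β/2)*(2/β) = 1 by field_simp, Real.rpow_one]
      _ = gβ + a * (p-β) + c * p ^ (2-2/β) + ε * (1 + (p-β)) := rfl
  -- take ε → 0
  have hq : (0:ℝ) < 1 + (p-β) := by linarith
  refine le_of_forall_pos_le_add fun δ hδ => ?_
  have h := key (δ / (1 + (p-β))) (div_pos hδ hq)
  calc G p ^ (2/β) ≤ gβ + a * (p-β) + c * p ^ (2-2/β) + (δ / (1 + (p-β))) * (1 + (p-β)) := h
    _ = gβ + a * (p-β) + c * p ^ (2-2/β) + δ := by
        rw [div_mul_cancel₀ _ hq.ne']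
end

section
/- Let $n \ge 3$ and let unit vectors $x = (x_e)$, $y = (y_e)$, $z = (z_e)$ in $\mathbb{R}^{\binom{[n]}{2}}$ (indexed by two-element subsets of $[n]$) be given, each of Euclidean norm at most 1. Then $\sum_{(i_1,i_2,i_3) \in [n]^{\underline{3}}} x_{\{i_1,i_2\}}\, y_{\{i_2,i_3\}}\, z_{\{i_1,i_3\}} \le 2^{3/2}$, where $[n]^{\underline{3}}$ is the set of triples of pairwise distinct indices in $[n]$. -/
open Finset

lemma fiber_eq {n : ℕ} (a b : Fin n) (hab : a ≠ b) :
    ((univ ×ˢ univ : Finset (Fin n × Fin n)).filter fun p => p.1 ≠ p.2).filter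
        (fun p => ({p.1, p.2} : Finset (Fin n)) = {a, b}) = {(a, b), (b, a)} := by
  ext p
  simp only [mem_filter, mem_product, mem_univ, true_and, mem_insert, mem_singleton]
  constructor
  · rintro ⟨hne, he⟩
    have h1 : p.1 ∈ ({a, b} : Finset (Fin n)) := by
      rw [← he]; exact mem_insert_self _ _
    have h2 : p.2 ∈ ({a, b} : Finset (Fin n)) := by
      rw [← he]; exact mem_insert_of_mem (mem_singleton_self _)
    simp only [mem_insert, mem_singleton] at h1 h2
    rcases h1 with h1 | h1 <;> rcases h2 with h2 | h2
    · exact absurd (h1.trans h2.symm) hne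
    · left; exact Prod.ext h1 h2
    · right; exact Prod.ext h1 h2
    · exact absurd (h1.trans h2.symm) hne
  · rintro (rfl | rfl)
    · exact ⟨hab, rfl⟩
    · exact ⟨hab.symm, Finset.pair_comm _ _⟩

lemma pair_sum {n : ℕ} (f : Finset (Fin n) → ℝ) :
    ∑ i : Fin n, ∑ j : Fin n, (if i ≠ j then f {i, j} else 0)
      = 2 * ∑ e ∈ Finset.univ.powersetCard 2, f e := by
  rw [← Finset.sum_product']
  have h1 : ∑ p ∈ (univ ×ˢ univ : Finset (Fin n × Fin n)),
      (if p.1 ≠ p.2 then f {p.1, p.2} else 0)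
      = ∑ p ∈ ((univ ×ˢ univ : Finset (Fin n × Fin n)).filter fun p => p.1 ≠ p.2),
          f {p.1, p.2} := (Finset.sum_filter _ _).symm
  rw [h1]
  rw [← Finset.sum_fiberwise_of_maps_to (g := fun p : Fin n × Fin n => ({p.1, p.2} : Finset (Fin n)))
      (t := Finset.univ.powersetCard 2) ?_]
  · rw [Finset.mul_sum]
    apply Finset.sum_congr rfl
    intro e he
    rw [Finset.mem_powersetCard] at he
    obtain ⟨a, b, hab, rfl⟩ := Finset.card_eq_two.mp he.2
    rw [fiber_eq a b hab, Finset.sum_pair (by simp [Prod.ext_iff, hab])]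
    rw [Finset.pair_comm b a]
    ring
  · intro p hp
    rw [Finset.mem_filter] at hp
    rw [Finset.mem_powersetCard]
    exact ⟨Finset.subset_univ _, Finset.card_pair hp.2⟩

/-- The `{1}{2}{3}` injective tensor norm bound for the third derivative of the
triangle-counting polynomial: if `x, y, z` are arrays indexed by the two-element
subsets of `[n]`, each of Euclidean norm at most `1`, then
`∑_{(i₁,i₂,i₃) distinct} x_{\{i₁,i₂\}} y_{\{i₂,i₃\}} z_{\{i₁,i₃\}} ≤ 2^{3/2}`. -/
theorem stmt13 (n : ℕ) (hn : 3 ≤ n) (x y z : Finset (Fin n) → ℝ)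
    (hx : ∑ e ∈ Finset.univ.powersetCard 2, x e ^ 2 ≤ 1)
    (hy : ∑ e ∈ Finset.univ.powersetCard 2, y e ^ 2 ≤ 1)
    (hz : ∑ e ∈ Finset.univ.powersetCard 2, z e ^ 2 ≤ 1) :
    ∑ i₁ : Fin n, ∑ i₂ : Fin n, ∑ i₃ : Fin n,
        (if i₁ ≠ i₂ ∧ i₁ ≠ i₃ ∧ i₂ ≠ i₃ then
          x {i₁, i₂} * y {i₂, i₃} * z {i₁, i₃} else 0) ≤
      2 * Real.sqrt 2 := by
  have key : ∑ i₁ : Fin n, ∑ i₂ : Fin n, ∑ i₃ : Fin n,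
        (if i₁ ≠ i₂ ∧ i₁ ≠ i₃ ∧ i₂ ≠ i₃ then
          x {i₁, i₂} * y {i₂, i₃} * z {i₁, i₃} else 0)
      = ∑ p ∈ (univ ×ˢ univ : Finset (Fin n × Fin n)),
          (if p.1 ≠ p.2 then x {p.1, p.2} else 0) *
          (∑ i₃ : Fin n, (if p.2 ≠ i₃ then y {p.2, i₃} else 0) *
            (if p.1 ≠ i₃ then z {p.1, i₃} else 0)) := by
    rw [← Finset.sum_product']
    apply Finset.sum_congr rfl
    intro p _
    rw [Finset.mul_sum]
    apply Finset.sum_congr rfl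
    intro i₃ _
    by_cases h1 : p.1 = p.2 <;> by_cases h2 : p.1 = i₃ <;> by_cases h3 : p.2 = i₃ <;>
      simp [h1, h2, h3, mul_assoc]
  rw [key]
  -- bound on ∑ X²
  have hXsq : ∑ p ∈ (univ ×ˢ univ : Finset (Fin n × Fin n)),
      (if p.1 ≠ p.2 then x {p.1, p.2} else 0) ^ 2 ≤ 2 := by
    have e1 : ∑ p ∈ (univ ×ˢ univ : Finset (Fin n × Fin n)),
        (if p.1 ≠ p.2 then x {p.1, p.2} else 0) ^ 2
        = ∑ i : Fin n, ∑ j : Fin n, (if i ≠ j then (fun e => x e ^ 2) {i, j} else 0) := by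
      rw [← Finset.sum_product']
      apply Finset.sum_congr rfl
      intro p _
      by_cases h : p.1 = p.2 <;> simp [h]
    rw [e1, pair_sum (fun e => x e ^ 2)]
    nlinarith
  have hYsum : ∑ i : Fin n, (∑ i₃ : Fin n, (if i ≠ i₃ then y {i, i₃} else 0) ^ 2) ≤ 2 := by
    have e1 : ∑ i : Fin n, (∑ i₃ : Fin n, (if i ≠ i₃ then y {i, i₃} else 0) ^ 2)
        = ∑ i : Fin n, ∑ j : Fin n, (if i ≠ j then (fun e => y e ^ 2) {i, j} else 0) := by
      apply Finset.sum_congr rfl; intro i _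
      apply Finset.sum_congr rfl; intro j _
      by_cases h : i = j <;> simp [h]
    rw [e1, pair_sum (fun e => y e ^ 2)]
    nlinarith
  have hZsum : ∑ i : Fin n, (∑ i₃ : Fin n, (if i ≠ i₃ then z {i, i₃} else 0) ^ 2) ≤ 2 := by
    have e1 : ∑ i : Fin n, (∑ i₃ : Fin n, (if i ≠ i₃ then z {i, i₃} else 0) ^ 2)
        = ∑ i : Fin n, ∑ j : Fin n, (if i ≠ j then (fun e => z e ^ 2) {i, j} else 0) := by
      apply Finset.sum_congr rfl; intro i _
      apply Finset.sum_congr rfl; intro j _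
      by_cases h : i = j <;> simp [h]
    rw [e1, pair_sum (fun e => z e ^ 2)]
    nlinarith
  have hYnn : ∀ i : Fin n, (0:ℝ) ≤ ∑ i₃ : Fin n, (if i ≠ i₃ then y {i, i₃} else 0) ^ 2 :=
    fun i => Finset.sum_nonneg fun j _ => sq_nonneg _
  -- bound on ∑ B²
  have hBsq : ∑ p ∈ (univ ×ˢ univ : Finset (Fin n × Fin n)),
      (∑ i₃ : Fin n, (if p.2 ≠ i₃ then y {p.2, i₃} else 0) *
        (if p.1 ≠ i₃ then z {p.1, i₃} else 0)) ^ 2 ≤ 4 := by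
    calc ∑ p ∈ (univ ×ˢ univ : Finset (Fin n × Fin n)),
        (∑ i₃ : Fin n, (if p.2 ≠ i₃ then y {p.2, i₃} else 0) *
          (if p.1 ≠ i₃ then z {p.1, i₃} else 0)) ^ 2
        ≤ ∑ p ∈ (univ ×ˢ univ : Finset (Fin n × Fin n)),
          (∑ i₃ : Fin n, (if p.2 ≠ i₃ then y {p.2, i₃} else 0) ^ 2) *
          (∑ i₃ : Fin n, (if p.1 ≠ i₃ then z {p.1, i₃} else 0) ^ 2) := by
          apply Finset.sum_le_sum
          intro p _
          exact Finset.sum_mul_sq_le_sq_mul_sq _ _ _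
      _ = (∑ i : Fin n, (∑ i₃ : Fin n, (if i ≠ i₃ then z {i, i₃} else 0) ^ 2)) *
          (∑ j : Fin n, (∑ i₃ : Fin n, (if j ≠ i₃ then y {j, i₃} else 0) ^ 2)) := by
          conv_rhs => rw [Finset.sum_mul_sum, ← Finset.sum_product']
          apply Finset.sum_congr rfl; intro p _
          ring
      _ ≤ 2 * 2 :=
          mul_le_mul hZsum hYsum (Finset.sum_nonneg fun i _ => hYnn i) (by norm_num)
      _ = 4 := by norm_num
  -- Cauchy-Schwarz
  have hCS := Finset.sum_mul_sq_le_sq_mul_sq (univ ×ˢ univ : Finset (Fin n × Fin n))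
    (fun p => if p.1 ≠ p.2 then x {p.1, p.2} else 0)
    (fun p => ∑ i₃ : Fin n, (if p.2 ≠ i₃ then y {p.2, i₃} else 0) *
      (if p.1 ≠ i₃ then z {p.1, i₃} else 0))
  set S := ∑ p ∈ (univ ×ˢ univ : Finset (Fin n × Fin n)),
      (if p.1 ≠ p.2 then x {p.1, p.2} else 0) *
      (∑ i₃ : Fin n, (if p.2 ≠ i₃ then y {p.2, i₃} else 0) *
        (if p.1 ≠ i₃ then z {p.1, i₃} else 0)) with hSdef
  have hS2 : S ^ 2 ≤ 8 := by
    have h1 : (0:ℝ) ≤ ∑ p ∈ (univ ×ˢ univ : Finset (Fin n × Fin n)),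
        (if p.1 ≠ p.2 then x {p.1, p.2} else 0) ^ 2 :=
      Finset.sum_nonneg fun p _ => sq_nonneg _
    have h2 : (0:ℝ) ≤ ∑ p ∈ (univ ×ˢ univ : Finset (Fin n × Fin n)),
        (∑ i₃ : Fin n, (if p.2 ≠ i₃ then y {p.2, i₃} else 0) *
          (if p.1 ≠ i₃ then z {p.1, i₃} else 0)) ^ 2 :=
      Finset.sum_nonneg fun p _ => sq_nonneg _
    nlinarith
  calc S ≤ |S| := le_abs_self S
    _ = Real.sqrt (S ^ 2) := (Real.sqrt_sq_eq_abs S).symm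
    _ ≤ Real.sqrt 8 := Real.sqrt_le_sqrt hS2
    _ = 2 * Real.sqrt 2 := by
        rw [show (8:ℝ) = 2 ^ 2 * 2 by norm_num, Real.sqrt_mul (by positivity),
          Real.sqrt_sq (by norm_num)]
end

section
/- Let $n \ge 3$ and let $(y_{e_2,e_3})$ be a real array indexed by pairs of two-element subsets of $[n]$ with $\sum_{e_2,e_3} y_{e_2,e_3}^2 \le 1$, and let $(x_{e_1})$ be a real vector indexed by two-element subsets of $[n]$ with $\sum_{e_1} x_{e_1}^2 \le 1$. Then $\sum_{e_1,e_2,e_3} \mathbf{1}\{e_1,e_2,e_3 \text{ form a triangle}\}\, x_{e_1} y_{e_2,e_3} \le \sqrt{2(n-2)}$, where three edges form a triangle if their union has exactly 3 vertices and they are pairwise distinct. -/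
open Finset

section helpers
variable {α : Type*} [DecidableEq α]

lemma mem_pair_of_eq {a b c d : α} (h : ({a, b} : Finset α) = {c, d}) :
    (a = c ∨ a = d) ∧ (b = c ∨ b = d) := by
  constructor
  · have : a ∈ ({c, d} : Finset α) := h ▸ (by simp)
    simpa using this
  · have : b ∈ ({c, d} : Finset α) := h ▸ (by simp)
    simpa using this

lemma pair_eq_pair_iff' {a b c d : α} (h : a ≠ b) :
    ({a, b} : Finset α) = {c, d} ↔ (a = c ∧ b = d) ∨ (a = d ∧ b = c) := by
  constructor
  · intro he
    obtain ⟨h1, h2⟩ := mem_pair_of_eq he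
    rcases h1 with h1 | h1
    · refine Or.inl ⟨h1, ?_⟩
      rcases h2 with h2 | h2
      · exact absurd (h1.trans h2.symm) h
      · exact h2
    · refine Or.inr ⟨h1, ?_⟩
      rcases h2 with h2 | h2
      · exact h2
      · exact absurd (h1.trans h2.symm) h
  · rintro (⟨rfl, rfl⟩ | ⟨rfl, rfl⟩)
    · rfl
    · exact Finset.pair_comm _ _

lemma pair_ne_pair_left {a b c : α} (hac : a ≠ c) (hbc : b ≠ c) :
    ({a, b} : Finset α) ≠ {a, c} := by
  intro heq
  have : c ∈ ({a, b} : Finset α) := heq ▸ (by simp)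
  simp only [Finset.mem_insert, Finset.mem_singleton] at this
  rcases this with h | h
  · exact hac h.symm
  · exact hbc h.symm

lemma third_edge {a b c : α} {e : Finset α}
    (hab : a ≠ b) (hac : a ≠ c) (hbc : b ≠ c) (hsub : e ⊆ {a, b, c}) (hcard : e.card = 2)
    (h1 : e ≠ {a, b}) (h2 : e ≠ {a, c}) : e = {b, c} := by
  obtain ⟨u, v, huv, rfl⟩ := Finset.card_eq_two.1 hcard
  have hu : u = a ∨ u = b ∨ u = c := by
    simpa using hsub (Finset.mem_insert_self u {v})
  have hv : v = a ∨ v = b ∨ v = c := by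
    have : v ∈ ({u, v} : Finset α) := by simp
    simpa using hsub this
  rcases hu with rfl | rfl | rfl <;> rcases hv with rfl | rfl | rfl
  · exact absurd rfl huv
  · exact absurd rfl h1
  · exact absurd rfl h2
  · exact absurd (Finset.pair_comm u v) h1
  · exact absurd rfl huv
  · rfl
  · exact absurd (Finset.pair_comm u v) h2
  · exact Finset.pair_comm u v
  · exact absurd rfl huv

end helpers

set_option maxHeartbeats 1000000 in
/-- The `{2,3}{1}` injective tensor norm bound for the third derivative of the
triangle-counting polynomial: for arrays `x = (x_{e₁})` and `y = (y_{e₂,e₃})` indexed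
by (pairs of) two-element subsets of `[n]`, each of Euclidean norm at most `1`,
`∑_{e₁,e₂,e₃ forming a triangle} x_{e₁} y_{e₂,e₃} ≤ √(2(n-2))`, where three edges
form a triangle if they are pairwise distinct and their union has exactly 3
vertices. -/
theorem stmt14 (n : ℕ) (hn : 3 ≤ n)
    (x : Finset (Fin n) → ℝ) (y : Finset (Fin n) → Finset (Fin n) → ℝ)
    (hx : ∑ e ∈ Finset.univ.powersetCard 2, x e ^ 2 ≤ 1)
    (hy : ∑ e₂ ∈ Finset.univ.powersetCard 2, ∑ e₃ ∈ Finset.univ.powersetCard 2,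
      y e₂ e₃ ^ 2 ≤ 1) :
    ∑ e₁ ∈ Finset.univ.powersetCard 2, ∑ e₂ ∈ Finset.univ.powersetCard 2,
        ∑ e₃ ∈ Finset.univ.powersetCard 2,
        (if e₁ ≠ e₂ ∧ e₁ ≠ e₃ ∧ e₂ ≠ e₃ ∧ (e₁ ∪ e₂ ∪ e₃).card = 3 then
          x e₁ * y e₂ e₃ else 0) ≤
      Real.sqrt (2 * ((n : ℝ) - 2)) := by
  classical
  set S : Finset (Finset (Fin n)) := Finset.univ.powersetCard 2 with hS
  set D : Finset (Fin n × Fin n × Fin n) :=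
    Finset.univ.filter (fun t => t.1 ≠ t.2.1 ∧ t.1 ≠ t.2.2 ∧ t.2.1 ≠ t.2.2) with hD
  have hmemS : ∀ e : Finset (Fin n), e ∈ S ↔ e.card = 2 := by
    intro e; simp [hS, Finset.mem_powersetCard_univ]
  have hmemD : ∀ t : Fin n × Fin n × Fin n,
      t ∈ D ↔ t.1 ≠ t.2.1 ∧ t.1 ≠ t.2.2 ∧ t.2.1 ≠ t.2.2 := by
    intro t; simp [hD]
  -- Step 1 : rewrite the LHS as a sum over ordered distinct vertex triples
  have key : ∑ e₁ ∈ S, ∑ e₂ ∈ S, ∑ e₃ ∈ S,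
        (if e₁ ≠ e₂ ∧ e₁ ≠ e₃ ∧ e₂ ≠ e₃ ∧ (e₁ ∪ e₂ ∪ e₃).card = 3 then
          x e₁ * y e₂ e₃ else 0)
      = ∑ t ∈ D, x {t.1, t.2.1} * y {t.1, t.2.2} {t.2.1, t.2.2} := by
    have e1 : ∑ e₁ ∈ S, ∑ e₂ ∈ S, ∑ e₃ ∈ S,
        (if e₁ ≠ e₂ ∧ e₁ ≠ e₃ ∧ e₂ ≠ e₃ ∧ (e₁ ∪ e₂ ∪ e₃).card = 3 then
          x e₁ * y e₂ e₃ else 0)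
        = ∑ p ∈ (S ×ˢ S ×ˢ S).filter
            (fun p => p.1 ≠ p.2.1 ∧ p.1 ≠ p.2.2 ∧ p.2.1 ≠ p.2.2 ∧
              (p.1 ∪ p.2.1 ∪ p.2.2).card = 3),
            x p.1 * y p.2.1 p.2.2 := by
      rw [Finset.sum_filter, Finset.sum_product]
      refine Finset.sum_congr rfl fun e₁ _ => ?_
      rw [Finset.sum_product]
    rw [e1]
    refine (Finset.sum_bij
      (fun (t : Fin n × Fin n × Fin n) (_ : t ∈ D) =>
        (({t.1, t.2.1}, {t.1, t.2.2}, {t.2.1, t.2.2}) :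
          Finset (Fin n) × Finset (Fin n) × Finset (Fin n)))
      ?_ ?_ ?_ ?_).symm
    · -- maps to
      rintro ⟨a, b, c⟩ ht
      obtain ⟨hab, hac, hbc⟩ := (hmemD _).1 ht
      simp only at hab hac hbc
      simp only [Finset.mem_filter, Finset.mem_product]
      refine ⟨⟨(hmemS _).2 (Finset.card_pair hab),
        (hmemS _).2 (Finset.card_pair hac), (hmemS _).2 (Finset.card_pair hbc)⟩,
        ?_, ?_, ?_, ?_⟩
      · intro h
        have hc : c ∈ ({a, b} : Finset (Fin n)) := by rw [h]; simp
        simp only [Finset.mem_insert, Finset.mem_singleton] at hc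
        rcases hc with h' | h'
        · exact hac h'.symm
        · exact hbc h'.symm
      · intro h
        have hc : c ∈ ({a, b} : Finset (Fin n)) := by rw [h]; simp
        simp only [Finset.mem_insert, Finset.mem_singleton] at hc
        rcases hc with h' | h'
        · exact hac h'.symm
        · exact hbc h'.symm
      · intro h
        have hb : b ∈ ({a, c} : Finset (Fin n)) := by rw [h]; simp
        simp only [Finset.mem_insert, Finset.mem_singleton] at hb
        rcases hb with h' | h'
        · exact hab h'.symm
        · exact hbc h'
      · have hU : ({a, b} ∪ {a, c} ∪ {b, c} : Finset (Fin n)) = {a, b, c} := by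
          ext z; simp only [Finset.mem_union, Finset.mem_insert, Finset.mem_singleton]; tauto
        rw [hU]
        exact Finset.card_eq_three.2 ⟨a, b, c, hab, hac, hbc, rfl⟩
    · -- injective
      rintro ⟨a, b, c⟩ ht ⟨d, e, f⟩ ht' heq
      obtain ⟨hab, hac, hbc⟩ := (hmemD _).1 ht
      obtain ⟨hde, hdf, hef⟩ := (hmemD _).1 ht'
      simp only at hab hac hbc hde hdf hef
      simp only [Prod.mk.injEq] at heq
      obtain ⟨h1, h2, h3⟩ := heq
      have had : a = d := by
        by_contra had
        have hae : a = e := ((mem_pair_of_eq h1).1).resolve_left had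
        have haf : a = f := ((mem_pair_of_eq h2).1).resolve_left had
        exact hef (hae.symm.trans haf)
      have hbe : b = e := by
        by_contra hbe
        have hbd : b = d := ((mem_pair_of_eq h1).2).resolve_right hbe
        have hbf : b = f := ((mem_pair_of_eq h3).1).resolve_left hbe
        exact hdf (hbd.symm.trans hbf)
      have hcf : c = f := by
        by_contra hcf
        have hcd : c = d := ((mem_pair_of_eq h2).2).resolve_right hcf
        have hce : c = e := ((mem_pair_of_eq h3).2).resolve_right hcf
        exact hde (hcd.symm.trans hce)
      simp only [Prod.mk.injEq]
      exact ⟨had, hbe, hcf⟩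
    · -- surjective
      rintro ⟨e₁, e₂, e₃⟩ hp
      simp only [Finset.mem_filter, Finset.mem_product] at hp
      obtain ⟨⟨hm1, hm2, hm3⟩, hne12, hne13, hne23, hcard3⟩ := hp
      have h1 : e₁.card = 2 := (hmemS _).1 hm1
      have h2 : e₂.card = 2 := (hmemS _).1 hm2
      have h3 : e₃.card = 2 := (hmemS _).1 hm3
      have hint : (e₁ ∩ e₂).Nonempty := by
        by_contra h
        rw [Finset.not_nonempty_iff_eq_empty] at h
        have hdis : Disjoint e₁ e₂ := Finset.disjoint_iff_inter_eq_empty.2 h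
        have h4 : (e₁ ∪ e₂).card = 4 := by
          rw [Finset.card_union_of_disjoint hdis, h1, h2]
        have hle : (e₁ ∪ e₂).card ≤ 3 := by
          calc (e₁ ∪ e₂).card ≤ (e₁ ∪ e₂ ∪ e₃).card :=
                Finset.card_le_card Finset.subset_union_left
            _ = 3 := hcard3
        omega
      obtain ⟨a, ha⟩ := hint
      have ha1 : a ∈ e₁ := (Finset.mem_inter.1 ha).1
      have ha2 : a ∈ e₂ := (Finset.mem_inter.1 ha).2
      have hb' : (e₁ \ e₂).Nonempty := by
        rw [Finset.sdiff_nonempty]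
        intro hsub
        exact hne12 (Finset.eq_of_subset_of_card_le hsub (by rw [h1, h2]))
      obtain ⟨b, hb⟩ := hb'
      have hb1 : b ∈ e₁ := (Finset.mem_sdiff.1 hb).1
      have hb2 : b ∉ e₂ := (Finset.mem_sdiff.1 hb).2
      have hc' : (e₂ \ e₁).Nonempty := by
        rw [Finset.sdiff_nonempty]
        intro hsub
        exact hne12 (Finset.eq_of_subset_of_card_le hsub (by rw [h1, h2])).symm
      obtain ⟨c, hc⟩ := hc'
      have hc2 : c ∈ e₂ := (Finset.mem_sdiff.1 hc).1
      have hc1 : c ∉ e₁ := (Finset.mem_sdiff.1 hc).2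
      have hab : a ≠ b := fun h => hb2 (h ▸ ha2)
      have hac : a ≠ c := fun h => hc1 (h ▸ ha1)
      have hbc : b ≠ c := fun h => hc1 (h ▸ hb1)
      have he₁ : e₁ = {a, b} := by
        refine (Finset.eq_of_subset_of_card_le ?_ ?_).symm
        · exact Finset.insert_subset ha1 (Finset.singleton_subset_iff.2 hb1)
        · rw [h1, Finset.card_pair hab]
      have he₂ : e₂ = {a, c} := by
        refine (Finset.eq_of_subset_of_card_le ?_ ?_).symm
        · exact Finset.insert_subset ha2 (Finset.singleton_subset_iff.2 hc2)
        · rw [h2, Finset.card_pair hac]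
      have hTcard : ({a, b, c} : Finset (Fin n)).card = 3 :=
        Finset.card_eq_three.2 ⟨a, b, c, hab, hac, hbc, rfl⟩
      have hT : e₁ ∪ e₂ ∪ e₃ = {a, b, c} := by
        refine (Finset.eq_of_subset_of_card_le ?_ ?_).symm
        · refine Finset.insert_subset ?_ (Finset.insert_subset ?_
            (Finset.singleton_subset_iff.2 ?_))
          · exact Finset.mem_union_left _ (Finset.mem_union_left _ ha1)
          · exact Finset.mem_union_left _ (Finset.mem_union_left _ hb1)
          · exact Finset.mem_union_left _ (Finset.mem_union_right _ hc2)
        · rw [hcard3, hTcard]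
      have he₃ : e₃ = {b, c} := by
        refine third_edge hab hac hbc ?_ h3 ?_ ?_
        · rw [← hT]
          exact Finset.subset_union_right
        · rw [← he₁]; exact hne13.symm
        · rw [← he₂]; exact hne23.symm
      refine ⟨(a, b, c), (hmemD _).2 ⟨hab, hac, hbc⟩, ?_⟩
      simp only [Prod.mk.injEq]
      exact ⟨he₁.symm, he₂.symm, he₃.symm⟩
    · -- values
      rintro ⟨a, b, c⟩ _
      rfl
  rw [key]
  -- Cauchy–Schwarz
  have hyD : ∑ t ∈ D, (y {t.1, t.2.2} {t.2.1, t.2.2}) ^ 2 ≤ 1 := by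
    have hinj : ∀ t ∈ D, ∀ t' ∈ D,
        (fun (t : Fin n × Fin n × Fin n) =>
          (({t.1, t.2.2}, {t.2.1, t.2.2}) : Finset (Fin n) × Finset (Fin n))) t =
        (fun t => ({t.1, t.2.2}, {t.2.1, t.2.2})) t' → t = t' := by
      rintro ⟨a, b, c⟩ ht ⟨d, e, f⟩ ht' heq
      obtain ⟨hab, hac, hbc⟩ := (hmemD _).1 ht
      obtain ⟨hde, hdf, hef⟩ := (hmemD _).1 ht'
      simp only at hab hac hbc hde hdf hef
      simp only [Prod.mk.injEq] at heq
      obtain ⟨h2, h3⟩ := heq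
      have hcf : c = f := by
        by_contra hcf
        have hcd : c = d := ((mem_pair_of_eq h2).2).resolve_right hcf
        have hce : c = e := ((mem_pair_of_eq h3).2).resolve_right hcf
        exact hde (hcd.symm.trans hce)
      have had : a = d := by
        by_contra had
        have h' : a = f := ((mem_pair_of_eq h2).1).resolve_left had
        exact hac (h'.trans hcf.symm)
      have hbe : b = e := by
        by_contra hbe
        have h' : b = f := ((mem_pair_of_eq h3).1).resolve_left hbe
        exact hbc (h'.trans hcf.symm)
      simp only [Prod.mk.injEq]
      exact ⟨had, hbe, hcf⟩
    calc ∑ t ∈ D, (y {t.1, t.2.2} {t.2.1, t.2.2}) ^ 2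
        = ∑ p ∈ D.image (fun t => (({t.1, t.2.2}, {t.2.1, t.2.2}) :
            Finset (Fin n) × Finset (Fin n))), (y p.1 p.2) ^ 2 :=
          (Finset.sum_image (f := fun p : Finset (Fin n) × Finset (Fin n) =>
            (y p.1 p.2) ^ 2) hinj).symm
      _ ≤ ∑ p ∈ S ×ˢ S, (y p.1 p.2) ^ 2 := by
          refine Finset.sum_le_sum_of_subset_of_nonneg ?_ (fun _ _ _ => sq_nonneg _)
          intro p hp
          simp only [Finset.mem_image] at hp
          obtain ⟨t, ht, rfl⟩ := hp
          obtain ⟨hab, hac, hbc⟩ := (hmemD _).1 ht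
          exact Finset.mem_product.2 ⟨(hmemS _).2 (Finset.card_pair hac),
            (hmemS _).2 (Finset.card_pair hbc)⟩
      _ = ∑ e₂ ∈ S, ∑ e₃ ∈ S, y e₂ e₃ ^ 2 := Finset.sum_product _ _ _
      _ ≤ 1 := hy
  have h2n : ((n : ℝ) - 2) ≥ 0 := by
    have : (3 : ℝ) ≤ (n : ℝ) := by exact_mod_cast hn
    linarith
  have hxD : ∑ t ∈ D, (x {t.1, t.2.1}) ^ 2 ≤ 2 * ((n : ℝ) - 2) := by
    have hcast : ((n - 2 : ℕ) : ℝ) = (n : ℝ) - 2 := by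
      have : (2 : ℕ) ≤ n := by omega
      push_cast [this]
      ring
    have step1 : ∑ t ∈ D, (x {t.1, t.2.1}) ^ 2
        = ∑ p ∈ (Finset.univ : Finset (Fin n × Fin n)).filter (fun p => p.1 ≠ p.2),
            ((n : ℝ) - 2) * (x {p.1, p.2}) ^ 2 := by
      rw [hD, Finset.sum_filter, Finset.sum_filter]
      simp only [Fintype.sum_prod_type]
      refine Finset.sum_congr rfl fun a _ => Finset.sum_congr rfl fun b _ => ?_
      by_cases hab : a = b
      · simp [hab]
      · simp only [ne_eq, hab, not_false_eq_true, true_and, if_true]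
        have hsum : ∑ c : Fin n, (if ¬a = c ∧ ¬b = c then (x {a, b}) ^ 2 else 0)
            = ((Finset.univ.filter (fun c : Fin n => ¬a = c ∧ ¬b = c)).card : ℝ)
              * (x {a, b}) ^ 2 := by
          rw [← Finset.sum_filter, Finset.sum_const, nsmul_eq_mul]
        have hfil : Finset.univ.filter (fun c : Fin n => ¬a = c ∧ ¬b = c)
            = ({a, b} : Finset (Fin n))ᶜ := by
          ext z
          simp [eq_comm, not_or, and_comm]
        have hcard : (Finset.univ.filter (fun c : Fin n => ¬a = c ∧ ¬b = c)).card
            = n - 2 := by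
          rw [hfil, Finset.card_compl, Finset.card_pair hab, Fintype.card_fin]
        rw [hsum, hcard, hcast]
    have hmaps : ∀ p ∈ (Finset.univ : Finset (Fin n × Fin n)).filter
        (fun p => p.1 ≠ p.2), ({p.1, p.2} : Finset (Fin n)) ∈ S := by
      rintro ⟨a, b⟩ hp
      simp only [Finset.mem_filter, Finset.mem_univ, true_and] at hp
      exact (hmemS _).2 (Finset.card_pair hp)
    have step2 : ∑ p ∈ (Finset.univ : Finset (Fin n × Fin n)).filter
          (fun p => p.1 ≠ p.2), (x {p.1, p.2}) ^ 2
        = ∑ e ∈ S, 2 * x e ^ 2 := by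
      rw [← Finset.sum_fiberwise_of_maps_to hmaps (fun p => (x {p.1, p.2}) ^ 2)]
      refine Finset.sum_congr rfl fun e he => ?_
      obtain ⟨u, v, huv, rfl⟩ := Finset.card_eq_two.1 ((hmemS _).1 he)
      have hfib : ((Finset.univ : Finset (Fin n × Fin n)).filter
            (fun p => p.1 ≠ p.2)).filter
            (fun p => ({p.1, p.2} : Finset (Fin n)) = {u, v})
          = {(u, v), (v, u)} := by
        ext ⟨a, b⟩
        simp only [Finset.mem_filter, Finset.mem_univ, true_and, Finset.mem_insert,
          Finset.mem_singleton, Prod.mk.injEq, ne_eq]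
        constructor
        · rintro ⟨hab, h⟩
          rcases (pair_eq_pair_iff' hab).1 h with ⟨h1, h2⟩ | ⟨h1, h2⟩
          · exact Or.inl ⟨h1, h2⟩
          · exact Or.inr ⟨h1, h2⟩
        · rintro (⟨rfl, rfl⟩ | ⟨rfl, rfl⟩)
          · exact ⟨huv, rfl⟩
          · exact ⟨Ne.symm huv, Finset.pair_comm _ _⟩
      rw [hfib, Finset.sum_insert (by simp [Prod.ext_iff, huv]), Finset.sum_singleton]
      rw [Finset.pair_comm v u]
      ring
    rw [step1, ← Finset.mul_sum, step2]
    have hsum2 : ∑ e ∈ S, 2 * x e ^ 2 ≤ 2 := by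
      rw [← Finset.mul_sum]
      nlinarith
    calc ((n : ℝ) - 2) * ∑ e ∈ S, 2 * x e ^ 2 ≤ ((n : ℝ) - 2) * 2 :=
          mul_le_mul_of_nonneg_left hsum2 h2n
      _ = 2 * ((n : ℝ) - 2) := by ring
  have hcs := Finset.sum_mul_sq_le_sq_mul_sq D
    (fun t => x {t.1, t.2.1}) (fun t => y {t.1, t.2.2} {t.2.1, t.2.2})
  have hynn : (0 : ℝ) ≤ ∑ t ∈ D, (y {t.1, t.2.2} {t.2.1, t.2.2}) ^ 2 :=
    Finset.sum_nonneg fun _ _ => sq_nonneg _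
  have hL2 : (∑ t ∈ D, x {t.1, t.2.1} * y {t.1, t.2.2} {t.2.1, t.2.2}) ^ 2
      ≤ 2 * ((n : ℝ) - 2) := by
    calc (∑ t ∈ D, x {t.1, t.2.1} * y {t.1, t.2.2} {t.2.1, t.2.2}) ^ 2
        ≤ (∑ t ∈ D, (x {t.1, t.2.1}) ^ 2) *
          (∑ t ∈ D, (y {t.1, t.2.2} {t.2.1, t.2.2}) ^ 2) := hcs
      _ ≤ (2 * ((n : ℝ) - 2)) * 1 := by
          refine mul_le_mul hxD hyD hynn (by linarith)
      _ = 2 * ((n : ℝ) - 2) := mul_one _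
  calc ∑ t ∈ D, x {t.1, t.2.1} * y {t.1, t.2.2} {t.2.1, t.2.2}
      ≤ |∑ t ∈ D, x {t.1, t.2.1} * y {t.1, t.2.2} {t.2.1, t.2.2}| := le_abs_self _
    _ = Real.sqrt ((∑ t ∈ D, x {t.1, t.2.1} * y {t.1, t.2.2} {t.2.1, t.2.2}) ^ 2) :=
        (Real.sqrt_sq_eq_abs _).symm
    _ ≤ Real.sqrt (2 * ((n : ℝ) - 2)) := Real.sqrt_le_sqrt hL2
end

section
/- Let $(V_r)_{r=1}^l$ be a sequence of finite nonempty sets with union $V$, and for each $r$ let $y^{(r)} = (y^{(r)}_{\mathbf{i}})_{\mathbf{i} \in [n]^{\underline{V_r}}}$ be a nonnegative array indexed by injections from $V_r$ to $[n]$ satisfying $\sum_{\mathbf{i} \in [n]^{\underline{V_r}}} (y^{(r)}_{\mathbf{i}})^2 \le 1$. Let $V_0 = \{v \in V : v \text{ belongs to exactly one } V_r\}$. Then $\sum_{\mathbf{i} \in [n]^{\underline{V}}} \prod_{r=1}^l y^{(r)}_{\mathbf{i}|_{V_r}} \le n^{\#V_0 / 2}$, where $[n]^{\underline{V}}$ denotes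 the set of injections from $V$ to $[n]$ and $\mathbf{i}|_{V_r}$ is the restriction of $\mathbf{i}$ to $V_r$. -/
set_option maxHeartbeats 1000000
set_option linter.unusedVariables false
set_option linter.unusedSectionVars false

open Finset Function

variable {ι : Type} [DecidableEq ι] {n : ℕ}

/-- Glue a value at `v` onto a function defined on `S.erase v`. -/
def glueFun (S : Finset ι) (v : ι) (z : {x : ι // x ∈ S.erase v} → Fin n) (a : Fin n) :
    {x : ι // x ∈ S} → Fin n :=
  fun w => if h : w.1 = v then a else z ⟨w.1, Finset.mem_erase.2 ⟨h, w.2⟩⟩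

lemma glueFun_inj_iff {S : Finset ι} {v : ι} (hv : v ∈ S)
    (z : {x : ι // x ∈ S.erase v} → Fin n) (a : Fin n) :
    Injective (glueFun S v z a) ↔ Injective z ∧ ∀ w, z w ≠ a := by
  constructor
  · intro h
    refine ⟨fun w₁ w₂ hw => ?_, fun w hw => ?_⟩
    · have : glueFun S v z a ⟨w₁.1, mem_of_mem_erase w₁.2⟩
          = glueFun S v z a ⟨w₂.1, mem_of_mem_erase w₂.2⟩ := by
        simp only [glueFun, dif_neg (mem_erase.1 w₁.2).1, dif_neg (mem_erase.1 w₂.2).1]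
        exact hw
      exact Subtype.ext (Subtype.mk_eq_mk.1 (h this))
    · have : glueFun S v z a ⟨w.1, mem_of_mem_erase w.2⟩ = glueFun S v z a ⟨v, hv⟩ := by
        simp only [glueFun, dif_neg (mem_erase.1 w.2).1, dif_pos rfl]
        exact hw
      exact (mem_erase.1 w.2).1 (congrArg Subtype.val (h this))
  · rintro ⟨hz, ha⟩ w₁ w₂ hw
    rcases eq_or_ne w₁.1 v with h1 | h1 <;> rcases eq_or_ne w₂.1 v with h2 | h2
    · exact Subtype.ext (h1.trans h2.symm)
    · rw [glueFun] at hw; rw [dif_pos h1, glueFun, dif_neg h2] at hw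
      exact absurd hw.symm (ha _)
    · rw [glueFun] at hw; rw [dif_neg h1, glueFun, dif_pos h2] at hw
      exact absurd hw (ha _)
    · rw [glueFun] at hw; rw [dif_neg h1, glueFun, dif_neg h2] at hw
      exact Subtype.ext (Subtype.mk_eq_mk.1 (hz hw))

/-- Functions on `S` correspond to pairs (function on `S.erase v`, value at `v`). -/
def glueEquiv (S : Finset ι) (v : ι) (hv : v ∈ S) :
    (({x : ι // x ∈ S.erase v} → Fin n) × Fin n) ≃ ({x : ι // x ∈ S} → Fin n) where
  toFun p := glueFun S v p.1 p.2
  invFun i := (fun w => i ⟨w.1, mem_of_mem_erase w.2⟩, i ⟨v, hv⟩)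
  left_inv p := by
    ext w
    · simp only [glueFun, dif_neg (mem_erase.1 w.2).1]
    · simp [glueFun]
  right_inv i := by
    funext w
    simp only [glueFun]
    split
    · next h => exact congrArg i (Subtype.ext h.symm)
    · rfl

lemma le_of_sq_le_sq' {a b : ℝ} (hb : 0 ≤ b) (h : a ^ 2 ≤ b ^ 2) (ha : 0 ≤ a) : a ≤ b := by
  nlinarith

/-- Pointwise bound: each value is at most the ℓ² norm. -/
lemma single_le_l2 {α : Type*} {A : Finset α} {f : α → ℝ} (hf : ∀ x, 0 ≤ f x) {a : α}
    (ha : a ∈ A) {g : ℝ} (hg : 0 ≤ g) (h : ∑ x ∈ A, f x ^ 2 ≤ g ^ 2) : f a ≤ g := by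
  refine le_of_sq_le_sq' hg ?_ (hf a)
  calc f a ^ 2 ≤ ∑ x ∈ A, f x ^ 2 :=
        Finset.single_le_sum (fun x _ => sq_nonneg (f x)) ha
    _ ≤ g ^ 2 := h

/-- The inner Hölder-type bound used in the peeling step. -/
lemma inner_bound {κ : Type*} [DecidableEq κ] (n : ℕ) (A : Finset (Fin n)) (R : Finset κ)
    (hR : R.Nonempty) (f : κ → Fin n → ℝ) (hf : ∀ r a, 0 ≤ f r a) (g : κ → ℝ)
    (hg0 : ∀ r, 0 ≤ g r) (hfg : ∀ r ∈ R, ∑ a ∈ A, f r a ^ 2 ≤ g r ^ 2) :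
    ∑ a ∈ A, ∏ r ∈ R, f r a ≤
      (n : ℝ) ^ (if R.card = 1 then (1 : ℝ) / 2 else 0) * ∏ r ∈ R, g r := by
  by_cases hcard : R.card = 1
  · obtain ⟨r, rfl⟩ := Finset.card_eq_one.1 hcard
    simp only [Finset.prod_singleton, if_pos rfl]
    have h1 : (∑ a ∈ A, f r a) ^ 2 ≤ (n : ℝ) * g r ^ 2 := by
      have := Finset.sum_mul_sq_le_sq_mul_sq A (fun _ => (1:ℝ)) (f r)
      simp only [one_mul, one_pow, Finset.sum_const, nsmul_eq_mul, mul_one] at this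
      calc (∑ a ∈ A, f r a) ^ 2 ≤ (A.card : ℝ) * ∑ a ∈ A, f r a ^ 2 := this
        _ ≤ (n : ℝ) * g r ^ 2 := by
            apply mul_le_mul (by exact_mod_cast (A.card_le_univ).trans_eq (by simp))
              (hfg r (mem_singleton_self r)) (Finset.sum_nonneg fun a _ => sq_nonneg _)
              (Nat.cast_nonneg n)
    refine le_of_sq_le_sq' (mul_nonneg (Real.rpow_nonneg (Nat.cast_nonneg n) _) (hg0 r)) ?_
      (Finset.sum_nonneg fun a _ => hf r a)
    calc (∑ a ∈ A, f r a) ^ 2 ≤ (n : ℝ) * g r ^ 2 := h1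
      _ = ((n:ℝ) ^ ((1:ℝ)/2) * g r) ^ 2 := by
          rw [mul_pow, ← Real.rpow_natCast ((n:ℝ) ^ ((1:ℝ)/2)) 2, ← Real.rpow_mul
            (Nat.cast_nonneg n)]
          norm_num
  · -- R.card ≥ 2
    obtain ⟨r₁, hr₁⟩ := hR
    have hc1 : 1 ≤ R.card := Finset.card_pos.2 ⟨r₁, hr₁⟩
    have h2 : (R.erase r₁).Nonempty := by
      rw [← Finset.card_pos, Finset.card_erase_of_mem hr₁]
      omega
    obtain ⟨r₂, hr₂⟩ := h2
    have hr₂R : r₂ ∈ R := mem_of_mem_erase hr₂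
    rw [if_neg hcard, Real.rpow_zero, one_mul]
    have hprodsplit : ∀ a, ∏ r ∈ R, f r a =
        f r₁ a * (f r₂ a * ∏ r ∈ (R.erase r₁).erase r₂, f r a) := by
      intro a
      rw [(Finset.mul_prod_erase _ (fun r => f r a) hr₂ :
            f r₂ a * ∏ r ∈ (R.erase r₁).erase r₂, f r a = ∏ r ∈ R.erase r₁, f r a),
          (Finset.mul_prod_erase R (fun r => f r a) hr₁)]
    have hgsplit : ∏ r ∈ R, g r = g r₁ * (g r₂ * ∏ r ∈ (R.erase r₁).erase r₂, g r) := by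
      rw [(Finset.mul_prod_erase _ g hr₂ :
            g r₂ * ∏ r ∈ (R.erase r₁).erase r₂, g r = ∏ r ∈ R.erase r₁, g r),
          (Finset.mul_prod_erase R g hr₁)]
    calc ∑ a ∈ A, ∏ r ∈ R, f r a
        ≤ ∑ a ∈ A, f r₁ a * f r₂ a * ∏ r ∈ (R.erase r₁).erase r₂, g r := by
          refine Finset.sum_le_sum fun a ha => ?_
          rw [hprodsplit a, ← mul_assoc]
          refine mul_le_mul_of_nonneg_left ?_ (mul_nonneg (hf r₁ a) (hf r₂ a))
          refine Finset.prod_le_prod (fun r _ => hf r a) fun r hr => ?_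
          exact single_le_l2 (hf r) ha (hg0 r)
            (hfg r (mem_of_mem_erase (mem_of_mem_erase hr)))
      _ = (∑ a ∈ A, f r₁ a * f r₂ a) * ∏ r ∈ (R.erase r₁).erase r₂, g r := by
          rw [← Finset.sum_mul]
      _ ≤ (g r₁ * g r₂) * ∏ r ∈ (R.erase r₁).erase r₂, g r := by
          refine mul_le_mul_of_nonneg_right ?_ (Finset.prod_nonneg fun r _ => hg0 r)
          refine le_of_sq_le_sq' (mul_nonneg (hg0 r₁) (hg0 r₂)) ?_
            (Finset.sum_nonneg fun a _ => mul_nonneg (hf r₁ a) (hf r₂ a))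
          calc (∑ a ∈ A, f r₁ a * f r₂ a) ^ 2
              ≤ (∑ a ∈ A, f r₁ a ^ 2) * ∑ a ∈ A, f r₂ a ^ 2 :=
                Finset.sum_mul_sq_le_sq_mul_sq A (f r₁) (f r₂)
            _ ≤ g r₁ ^ 2 * g r₂ ^ 2 := by
                refine mul_le_mul (hfg r₁ hr₁) (hfg r₂ hr₂R)
                  (Finset.sum_nonneg fun a _ => sq_nonneg _) (sq_nonneg _)
            _ = (g r₁ * g r₂) ^ 2 := (mul_pow _ _ _).symm
      _ = ∏ r ∈ R, g r := by rw [hgsplit, mul_assoc]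

lemma glueEquiv_apply (S : Finset ι) (v : ι) (hv : v ∈ S)
    (p : ({x : ι // x ∈ S.erase v} → Fin n) × Fin n) :
    glueEquiv S v hv p = glueFun S v p.1 p.2 := rfl

/-- Restriction of a function to a subset. -/
def restr {S T : Finset ι} (h : T ⊆ S) (i : {x : ι // x ∈ S} → Fin n) :
    {x : ι // x ∈ T} → Fin n :=
  fun w => i ⟨w.1, h w.2⟩

lemma restr_inj {S T : Finset ι} (h : T ⊆ S) {i : {x : ι // x ∈ S} → Fin n}
    (hi : Injective i) : Injective (restr h i) := fun w₁ w₂ hw =>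
  Subtype.ext (Subtype.mk_eq_mk.1 (hi hw))

/-- Peeling a vertex from an array via an ℓ² sum. -/
noncomputable def peelArr (n : ℕ) (S : Finset ι) (v : ι)
    (y : ({x : ι // x ∈ S} → Fin n) → ℝ) :
    ({x : ι // x ∈ S.erase v} → Fin n) → ℝ := fun z =>
  Real.sqrt (∑ a : Fin n,
    if Injective (glueFun S v z a) then y (glueFun S v z a) ^ 2 else 0)

/-- Transporting an array along the trivial erase. -/
def transArr (n : ℕ) (S : Finset ι) (v : ι) (hv : v ∉ S)
    (y : ({x : ι // x ∈ S} → Fin n) → ℝ) :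
    ({x : ι // x ∈ S.erase v} → Fin n) → ℝ := fun z =>
  y (fun w => z ⟨w.1, Finset.mem_erase.2 ⟨fun h => hv (h ▸ w.2), w.2⟩⟩)

lemma peelArr_norm {S : Finset ι} {v : ι} (hv : v ∈ S)
    {y : ({x : ι // x ∈ S} → Fin n) → ℝ}
    (hy : ∑ w : {x : ι // x ∈ S} → Fin n, (if Injective w then y w ^ 2 else 0) ≤ 1) :
    ∑ z : {x : ι // x ∈ S.erase v} → Fin n,
      (if Injective z then peelArr n S v y z ^ 2 else 0) ≤ 1 := by
  have h1 : ∀ z : {x : ι // x ∈ S.erase v} → Fin n,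
      (if Injective z then peelArr n S v y z ^ 2 else 0) ≤
        ∑ a : Fin n, (if Injective (glueFun S v z a) then y (glueFun S v z a) ^ 2 else 0) := by
    intro z
    have hnn : ∀ a : Fin n, (0:ℝ) ≤
        (if Injective (glueFun S v z a) then y (glueFun S v z a) ^ 2 else 0) := by
      intro a; split <;> simp [sq_nonneg]
    split
    · rw [peelArr, Real.sq_sqrt (Finset.sum_nonneg fun a _ => hnn a)]
    · exact Finset.sum_nonneg fun a _ => hnn a
  calc ∑ z : {x : ι // x ∈ S.erase v} → Fin n,
        (if Injective z then peelArr n S v y z ^ 2 else 0)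
      ≤ ∑ z : {x : ι // x ∈ S.erase v} → Fin n, ∑ a : Fin n,
          (if Injective (glueFun S v z a) then y (glueFun S v z a) ^ 2 else 0) :=
        Finset.sum_le_sum fun z _ => h1 z
    _ = ∑ w : {x : ι // x ∈ S} → Fin n, (if Injective w then y w ^ 2 else 0) := by
        rw [← Equiv.sum_comp (glueEquiv S v hv)
          (fun w => if Injective w then y w ^ 2 else 0), Fintype.sum_prod_type]
        exact Finset.sum_congr rfl fun z _ => Finset.sum_congr rfl fun a _ => by
          rw [glueEquiv_apply]
    _ ≤ 1 := hy

def eraseEquiv (n : ℕ) (S : Finset ι) (v : ι) (hv : v ∉ S) :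
    ({x : ι // x ∈ S.erase v} → Fin n) ≃ ({x : ι // x ∈ S} → Fin n) where
  toFun z := fun w => z ⟨w.1, Finset.mem_erase.2 ⟨fun e => hv (e ▸ w.2), w.2⟩⟩
  invFun i := fun w => i ⟨w.1, mem_of_mem_erase w.2⟩
  left_inv z := rfl
  right_inv i := rfl

lemma eraseEquiv_inj {S : Finset ι} {v : ι} (hv : v ∉ S)
    (z : {x : ι // x ∈ S.erase v} → Fin n) :
    Injective (eraseEquiv n S v hv z) ↔ Injective z := by
  constructor
  · intro h w₁ w₂ hw
    have h5 : eraseEquiv n S v hv z ⟨w₁.1, mem_of_mem_erase w₁.2⟩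
        = eraseEquiv n S v hv z ⟨w₂.1, mem_of_mem_erase w₂.2⟩ := hw
    exact Subtype.ext (Subtype.mk_eq_mk.1 (h h5))
  · intro h w₁ w₂ hw
    exact Subtype.ext (Subtype.mk_eq_mk.1 (h hw))

lemma transArr_norm {S : Finset ι} {v : ι} (hv : v ∉ S)
    {y : ({x : ι // x ∈ S} → Fin n) → ℝ}
    (hy : ∑ w : {x : ι // x ∈ S} → Fin n, (if Injective w then y w ^ 2 else 0) ≤ 1) :
    ∑ z : {x : ι // x ∈ S.erase v} → Fin n,
      (if Injective z then transArr n S v hv y z ^ 2 else 0) ≤ 1 := by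
  set E := eraseEquiv n S v hv with hE
  have h1 : ∀ z, (if Injective z then transArr n S v hv y z ^ 2 else 0)
      = (fun w => if Injective w then y w ^ 2 else 0) (E z) := by
    intro z
    have h4 : transArr n S v hv y z = y (E z) := rfl
    dsimp only
    rw [h4]
    exact if_congr (eraseEquiv_inj hv z).symm rfl rfl
  calc ∑ z : {x : ι // x ∈ S.erase v} → Fin n,
        (if Injective z then transArr n S v hv y z ^ 2 else 0)
      = ∑ z : {x : ι // x ∈ S.erase v} → Fin n,
          (fun w => if Injective w then y w ^ 2 else 0) (E z) :=
        Finset.sum_congr rfl fun z _ => h1 z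
    _ = ∑ w : {x : ι // x ∈ S} → Fin n, (if Injective w then y w ^ 2 else 0) := by
        exact Fintype.sum_equiv E _ _ (fun z => rfl)
    _ ≤ 1 := hy

lemma restr_glue_notmem {U S : Finset ι} {v : ι} (hS : S ⊆ U) (hv : v ∉ S)
    (j : {x : ι // x ∈ U.erase v} → Fin n) (a : Fin n) :
    restr hS (glueFun U v j a) =
      (fun w => (restr (Finset.erase_subset_erase v hS) j)
        ⟨w.1, Finset.mem_erase.2 ⟨fun h => hv (h ▸ w.2), w.2⟩⟩) := by
  funext w
  simp only [restr, glueFun, dif_neg (show ¬w.1 = v from fun h => hv (h ▸ w.2))]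

lemma restr_glue_mem {U S : Finset ι} {v : ι} (hS : S ⊆ U) (hv : v ∈ S)
    (j : {x : ι // x ∈ U.erase v} → Fin n) (a : Fin n) :
    restr hS (glueFun U v j a) =
      glueFun S v (restr (Finset.erase_subset_erase v hS) j) a := by
  funext w
  by_cases h : w.1 = v
  · simp only [restr, glueFun, dif_pos h]
  · simp only [restr, glueFun, dif_neg h]

lemma peel_bound {U S : Finset ι} {v : ι} (hS : S ⊆ U) (hv : v ∈ S)
    {y : ({x : ι // x ∈ S} → Fin n) → ℝ}
    (j : {x : ι // x ∈ U.erase v} → Fin n) (hj : Injective j) :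
    ∑ a ∈ Finset.univ.filter (fun a : Fin n => ∀ w, j w ≠ a),
        y (glueFun S v (restr (Finset.erase_subset_erase v hS) j) a) ^ 2
      ≤ peelArr n S v y (restr (Finset.erase_subset_erase v hS) j) ^ 2 := by
  set z := restr (Finset.erase_subset_erase v hS) j with hz
  have hnn : ∀ a : Fin n, (0:ℝ) ≤
      (if Injective (glueFun S v z a) then y (glueFun S v z a) ^ 2 else 0) := by
    intro a; split <;> simp [sq_nonneg]
  rw [peelArr, Real.sq_sqrt (Finset.sum_nonneg fun a _ => hnn a)]
  calc ∑ a ∈ Finset.univ.filter (fun a : Fin n => ∀ w, j w ≠ a), y (glueFun S v z a) ^ 2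
      = ∑ a ∈ Finset.univ.filter (fun a : Fin n => ∀ w, j w ≠ a),
          (if Injective (glueFun S v z a) then y (glueFun S v z a) ^ 2 else 0) := by
        refine Finset.sum_congr rfl fun a ha => ?_
        rw [if_pos]
        refine (glueFun_inj_iff hv z a).2 ⟨restr_inj _ hj, fun w => ?_⟩
        exact (Finset.mem_filter.1 ha).2 _
    _ ≤ ∑ a : Fin n, (if Injective (glueFun S v z a) then y (glueFun S v z a) ^ 2 else 0) :=
        Finset.sum_le_sum_of_subset_of_nonneg (Finset.subset_univ _) fun a _ _ => hnn a
lemma peelArr_nonneg {S : Finset ι} {v : ι} {y : ({x : ι // x ∈ S} → Fin n) → ℝ}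
    (z : {x : ι // x ∈ S.erase v} → Fin n) : 0 ≤ peelArr n S v y z :=
  Real.sqrt_nonneg _

lemma aux (n : ℕ) (U : Finset ι) :
    ∀ (l : ℕ) (V : Fin l → Finset ι) (hsub : ∀ r, V r ⊆ U),
      (∀ x ∈ U, ∃ r, x ∈ V r) →
      ∀ (y : (r : Fin l) → ({x : ι // x ∈ V r} → Fin n) → ℝ),
        (∀ r z, 0 ≤ y r z) →
        (∀ r, ∑ z : {x : ι // x ∈ V r} → Fin n,
            (if Function.Injective z then y r z ^ 2 else 0) ≤ 1) →
        (∑ i : {x : ι // x ∈ U} → Fin n,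
            if Function.Injective i then ∏ r : Fin l, y r (restr (hsub r) i) else 0) ≤
          (n : ℝ) ^ (((U.filter (fun x =>
            (Finset.univ.filter (fun r : Fin l => x ∈ V r)).card = 1)).card : ℝ) / 2) := by
  induction U using Finset.strongInduction with
  | _ U ih =>
  intro l V hsub hcov y hynn hy
  rcases U.eq_empty_or_nonempty with rfl | hUne
  · -- base case: U = ∅
    haveI hIE : IsEmpty {x : ι // x ∈ (∅ : Finset ι)} :=
      ⟨fun x => Finset.notMem_empty x.1 x.2⟩
    simp only [Finset.filter_empty, Finset.card_empty, Nat.cast_zero, zero_div,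
      Real.rpow_zero]
    rw [Fintype.sum_unique, if_pos (Function.injective_of_subsingleton _)]
    refine Finset.prod_le_one (fun r _ => hynn r _) (fun r _ => ?_)
    have hVr : V r = ∅ := Finset.subset_empty.1 (hsub r)
    haveI : IsEmpty {x : ι // x ∈ V r} := ⟨fun x => Finset.notMem_empty x.1 (hVr ▸ x.2)⟩
    have h1 := hy r
    rw [Fintype.sum_unique, if_pos (Function.injective_of_subsingleton _)] at h1
    have h2 : restr (n := n) (hsub r) default = default := Subsingleton.elim _ _
    rw [h2]
    exact le_of_sq_le_sq' zero_le_one (by rw [one_pow]; exact h1) (hynn r _)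
  rcases Nat.eq_zero_or_pos n with hn0 | hn
  · -- n = 0, U nonempty
    subst hn0
    obtain ⟨v, hv⟩ := hUne
    haveI : IsEmpty ({x : ι // x ∈ U} → Fin 0) := ⟨fun i => (i ⟨v, hv⟩).elim0⟩
    rw [Finset.univ_eq_empty, Finset.sum_empty]
    exact Real.rpow_nonneg (by norm_num) _
  -- main case
  obtain ⟨v, hv⟩ := hUne
  have hnpos : (0:ℝ) < n := by exact_mod_cast hn
  set W : Fin l → Finset ι := fun r => (V r).erase v with hW
  have hsub' : ∀ r, W r ⊆ U.erase v := fun r => Finset.erase_subset_erase v (hsub r)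
  have hcov' : ∀ x ∈ U.erase v, ∃ r, x ∈ W r := by
    intro x hx
    obtain ⟨r, hr⟩ := hcov x (Finset.mem_of_mem_erase hx)
    exact ⟨r, Finset.mem_erase.2 ⟨(Finset.mem_erase.1 hx).1, hr⟩⟩
  have hRne : (Finset.univ.filter (fun r : Fin l => v ∈ V r)).Nonempty := by
    obtain ⟨r, hr⟩ := hcov v hv
    exact ⟨r, Finset.mem_filter.2 ⟨Finset.mem_univ r, hr⟩⟩
  set Y : (r : Fin l) → ({x : ι // x ∈ W r} → Fin n) → ℝ :=
    fun r => if hr : v ∈ V r then peelArr n (V r) v (y r) else transArr n (V r) v hr (y r)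
    with hYdef
  have hYpos : ∀ r, v ∈ V r → Y r = peelArr n (V r) v (y r) := by
    intro r hr; rw [hYdef]; exact dif_pos hr
  have hYneg : ∀ r (hr : ¬ v ∈ V r), Y r = transArr n (V r) v hr (y r) := by
    intro r hr; rw [hYdef]; exact dif_neg hr
  have hYnn : ∀ r z, 0 ≤ Y r z := by
    intro r z
    by_cases hr : v ∈ V r
    · rw [hYpos r hr]; exact peelArr_nonneg z
    · rw [hYneg r hr]; exact hynn r _
  have hYnorm : ∀ r, ∑ z : {x : ι // x ∈ W r} → Fin n,
      (if Function.Injective z then Y r z ^ 2 else 0) ≤ 1 := by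
    intro r
    by_cases hr : v ∈ V r
    · rw [hYpos r hr]; exact peelArr_norm hr (hy r)
    · rw [hYneg r hr]; exact transArr_norm hr (hy r)
  have hIH := ih (U.erase v) (Finset.erase_ssubset hv) l W hsub' hcov' Y hYnn hYnorm
  -- the per-j bound
  have hperj : ∀ j : {x : ι // x ∈ U.erase v} → Fin n,
      (∑ a : Fin n, if Function.Injective (glueFun U v j a) then
          ∏ r : Fin l, y r (restr (hsub r) (glueFun U v j a)) else 0)
        ≤ (n:ℝ) ^ (if (Finset.univ.filter (fun r : Fin l => v ∈ V r)).card = 1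
              then (1:ℝ)/2 else 0)
          * (if Function.Injective j then ∏ r : Fin l, Y r (restr (hsub' r) j) else 0) := by
    intro j
    by_cases hj : Function.Injective j
    case neg =>
      rw [if_neg hj, mul_zero]
      refine le_of_eq (Finset.sum_eq_zero fun a _ => ?_)
      exact if_neg (fun hI => hj ((glueFun_inj_iff hv j a).1 hI).1)
    case pos =>
      rw [if_pos hj]
      set A : Finset (Fin n) := Finset.univ.filter (fun a : Fin n => ∀ w, j w ≠ a) with hA
      have hstep1 : (∑ a : Fin n, if Function.Injective (glueFun U v j a) then
          ∏ r : Fin l, y r (restr (hsub r) (glueFun U v j a)) else 0)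
          = ∑ a ∈ A, ∏ r : Fin l, y r (restr (hsub r) (glueFun U v j a)) := by
        rw [hA, Finset.sum_filter]
        refine Finset.sum_congr rfl fun a _ => ?_
        by_cases hga : ∀ w, j w ≠ a
        · rw [if_pos ((glueFun_inj_iff hv j a).2 ⟨hj, hga⟩), if_pos hga]
        · rw [if_neg (fun hI => hga ((glueFun_inj_iff hv j a).1 hI).2), if_neg hga]
      set C := ∏ r ∈ Finset.univ.filter (fun r : Fin l => ¬ v ∈ V r),
        Y r (restr (hsub' r) j) with hC
      have hCnn : 0 ≤ C := Finset.prod_nonneg fun r _ => hYnn r _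
      have hstep2 : ∀ a ∈ A, (∏ r : Fin l, y r (restr (hsub r) (glueFun U v j a)))
          = (∏ r ∈ Finset.univ.filter (fun r : Fin l => v ∈ V r),
              y r (glueFun (V r) v (restr (Finset.erase_subset_erase v (hsub r)) j) a))
            * C := by
        intro a ha
        have h2a : (∏ r ∈ Finset.univ.filter (fun r : Fin l => v ∈ V r),
              y r (restr (hsub r) (glueFun U v j a)))
            = ∏ r ∈ Finset.univ.filter (fun r : Fin l => v ∈ V r),
              y r (glueFun (V r) v (restr (Finset.erase_subset_erase v (hsub r)) j) a) :=
          Finset.prod_congr rfl fun r hr => by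
            rw [restr_glue_mem (hsub r) (Finset.mem_filter.1 hr).2 j a]
        have h2b : (∏ r ∈ Finset.univ.filter (fun r : Fin l => ¬ v ∈ V r),
              y r (restr (hsub r) (glueFun U v j a))) = C := by
          rw [hC]
          refine Finset.prod_congr rfl fun r hr => ?_
          have hrv : ¬ v ∈ V r := by simpa using (Finset.mem_filter.1 hr).2
          rw [restr_glue_notmem (hsub r) hrv j a, hYneg r hrv]
          rfl
        rw [← Finset.prod_filter_mul_prod_filter_not Finset.univ
          (fun r : Fin l => v ∈ V r) (fun r => y r (restr (hsub r) (glueFun U v j a))),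
          h2a, h2b]
      have hstep3 : (∑ a ∈ A, ∏ r ∈ Finset.univ.filter (fun r : Fin l => v ∈ V r),
            y r (glueFun (V r) v (restr (Finset.erase_subset_erase v (hsub r)) j) a))
          ≤ (n:ℝ) ^ (if (Finset.univ.filter (fun r : Fin l => v ∈ V r)).card = 1
                then (1:ℝ)/2 else 0)
            * ∏ r ∈ Finset.univ.filter (fun r : Fin l => v ∈ V r),
                Y r (restr (hsub' r) j) := by
        refine inner_bound n A _ hRne
          (fun r a => y r (glueFun (V r) v (restr (Finset.erase_subset_erase v (hsub r)) j) a))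
          (fun r a => hynn r _) (fun r => Y r (restr (hsub' r) j)) (fun r => hYnn r _) ?_
        intro r hr
        have hrv : v ∈ V r := (Finset.mem_filter.1 hr).2
        rw [hYpos r hrv]
        exact peel_bound (hsub r) hrv j hj
      calc (∑ a : Fin n, if Function.Injective (glueFun U v j a) then
              ∏ r : Fin l, y r (restr (hsub r) (glueFun U v j a)) else 0)
          = ∑ a ∈ A, ∏ r : Fin l, y r (restr (hsub r) (glueFun U v j a)) := hstep1
        _ = ∑ a ∈ A, (∏ r ∈ Finset.univ.filter (fun r : Fin l => v ∈ V r),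
              y r (glueFun (V r) v (restr (Finset.erase_subset_erase v (hsub r)) j) a)) * C :=
            Finset.sum_congr rfl hstep2
        _ = (∑ a ∈ A, ∏ r ∈ Finset.univ.filter (fun r : Fin l => v ∈ V r),
              y r (glueFun (V r) v (restr (Finset.erase_subset_erase v (hsub r)) j) a)) * C := by
            rw [Finset.sum_mul]
        _ ≤ ((n:ℝ) ^ (if (Finset.univ.filter (fun r : Fin l => v ∈ V r)).card = 1
                then (1:ℝ)/2 else 0)
              * ∏ r ∈ Finset.univ.filter (fun r : Fin l => v ∈ V r),
                  Y r (restr (hsub' r) j)) * C :=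
            mul_le_mul_of_nonneg_right hstep3 hCnn
        _ = (n:ℝ) ^ (if (Finset.univ.filter (fun r : Fin l => v ∈ V r)).card = 1
                then (1:ℝ)/2 else 0)
              * ∏ r : Fin l, Y r (restr (hsub' r) j) := by
            rw [mul_assoc, hC, Finset.prod_filter_mul_prod_filter_not]
  -- assemble
  have hmain := (Fintype.sum_equiv (glueEquiv U v hv)
      (fun p : ({x : ι // x ∈ U.erase v} → Fin n) × Fin n =>
        if Function.Injective (glueFun U v p.1 p.2) then
          ∏ r : Fin l, y r (restr (hsub r) (glueFun U v p.1 p.2)) else 0)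
      (fun i => if Function.Injective i then ∏ r : Fin l, y r (restr (hsub r) i) else 0)
      (fun p => by rw [glueEquiv_apply])).symm
  have hfe : ∀ x : ι, x ≠ v →
      (Finset.univ.filter (fun r : Fin l => x ∈ W r))
        = (Finset.univ.filter (fun r : Fin l => x ∈ V r)) := fun x hxv =>
    Finset.filter_congr fun r _ => by simp [hW, Finset.mem_erase, hxv]
  have hfilter : (U.erase v).filter (fun x =>
        (Finset.univ.filter (fun r : Fin l => x ∈ W r)).card = 1)
      = (U.filter (fun x =>
        (Finset.univ.filter (fun r : Fin l => x ∈ V r)).card = 1)).erase v := by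
    ext x
    simp only [Finset.mem_filter, Finset.mem_erase]
    constructor
    · rintro ⟨⟨hxv, hxU⟩, hP⟩
      exact ⟨hxv, hxU, by rwa [hfe x hxv] at hP⟩
    · rintro ⟨hxv, hxU, hP⟩
      exact ⟨⟨hxv, hxU⟩, by rwa [hfe x hxv]⟩
  rw [hfilter] at hIH
  calc (∑ i : {x : ι // x ∈ U} → Fin n,
          if Function.Injective i then ∏ r : Fin l, y r (restr (hsub r) i) else 0)
      = ∑ p : ({x : ι // x ∈ U.erase v} → Fin n) × Fin n,
          (if Function.Injective (glueFun U v p.1 p.2) then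
            ∏ r : Fin l, y r (restr (hsub r) (glueFun U v p.1 p.2)) else 0) := hmain
    _ = ∑ j : {x : ι // x ∈ U.erase v} → Fin n, ∑ a : Fin n,
          (if Function.Injective (glueFun U v j a) then
            ∏ r : Fin l, y r (restr (hsub r) (glueFun U v j a)) else 0) :=
        Fintype.sum_prod_type _
    _ ≤ ∑ j : {x : ι // x ∈ U.erase v} → Fin n,
          (n:ℝ) ^ (if (Finset.univ.filter (fun r : Fin l => v ∈ V r)).card = 1
              then (1:ℝ)/2 else 0)
            * (if Function.Injective j then ∏ r : Fin l, Y r (restr (hsub' r) j) else 0) :=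
        Finset.sum_le_sum fun j _ => hperj j
    _ = (n:ℝ) ^ (if (Finset.univ.filter (fun r : Fin l => v ∈ V r)).card = 1
            then (1:ℝ)/2 else 0)
          * ∑ j : {x : ι // x ∈ U.erase v} → Fin n,
            (if Function.Injective j then ∏ r : Fin l, Y r (restr (hsub' r) j) else 0) := by
        rw [Finset.mul_sum]
    _ ≤ (n:ℝ) ^ (if (Finset.univ.filter (fun r : Fin l => v ∈ V r)).card = 1
            then (1:ℝ)/2 else 0)
          * (n:ℝ) ^ ((((U.filter (fun x =>
              (Finset.univ.filter (fun r : Fin l => x ∈ V r)).card = 1)).erase v).card : ℝ) / 2) :=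
        mul_le_mul_of_nonneg_left hIH (Real.rpow_nonneg (Nat.cast_nonneg n) _)
    _ = (n:ℝ) ^ (((U.filter (fun x =>
            (Finset.univ.filter (fun r : Fin l => x ∈ V r)).card = 1)).card : ℝ) / 2) := by
        by_cases hk : (Finset.univ.filter (fun r : Fin l => v ∈ V r)).card = 1
        · have hvP : v ∈ U.filter (fun x =>
              (Finset.univ.filter (fun r : Fin l => x ∈ V r)).card = 1) :=
            Finset.mem_filter.2 ⟨hv, hk⟩
          have hcpos : 0 < (U.filter (fun x =>
              (Finset.univ.filter (fun r : Fin l => x ∈ V r)).card = 1)).card :=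
            Finset.card_pos.2 ⟨v, hvP⟩
          rw [if_pos hk, Finset.card_erase_of_mem hvP, ← Real.rpow_add hnpos,
            Nat.cast_sub hcpos]
          ring_nf
        · have hnotmem : v ∉ U.filter (fun x =>
              (Finset.univ.filter (fun r : Fin l => x ∈ V r)).card = 1) :=
            fun hmem => hk (Finset.mem_filter.1 hmem).2
          rw [if_neg hk, Real.rpow_zero, one_mul, Finset.erase_eq_of_notMem hnotmem]

/-- The key combinatorial inequality for norms of derivatives of subgraph-counting
polynomials: if `V₁,…,V_l` are finite nonempty sets with union `V`, and for each `r`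
the nonnegative array `y^{(r)}`, indexed by injections `V_r → [n]`, has Euclidean norm
at most `1`, then `∑_{i : V ↪ [n]} ∏_r y^{(r)}_{i|_{V_r}} ≤ n^{#V₀/2}`, where `V₀` is
the set of vertices belonging to exactly one `V_r`. -/
theorem stmt15 (ι : Type) [DecidableEq ι] (n l : ℕ)
    (V : Fin l → Finset ι) (hV : ∀ r, (V r).Nonempty)
    (y : (r : Fin l) → ({v : ι // v ∈ V r} → Fin n) → ℝ)
    (hynn : ∀ r z, 0 ≤ y r z)
    (hy : ∀ r, ∑ z : {v : ι // v ∈ V r} → Fin n,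
      (if Function.Injective z then y r z ^ 2 else 0) ≤ 1) :
    (∑ i : {v : ι // v ∈ Finset.univ.biUnion V} → Fin n,
        if Function.Injective i then
          ∏ r : Fin l, y r
            (fun v => i ⟨v.1, Finset.mem_biUnion.2 ⟨r, Finset.mem_univ r, v.2⟩⟩)
        else 0) ≤
      (n : ℝ) ^
        ((((Finset.univ.biUnion V).filter
            (fun v => (Finset.univ.filter (fun r : Fin l => v ∈ V r)).card = 1)).card
          : ℝ) / 2) := by
  exact aux n (Finset.univ.biUnion V) l V
    (fun r => Finset.subset_biUnion_of_mem V (Finset.mem_univ r))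
    (fun x hx => by
      obtain ⟨r, -, hr⟩ := Finset.mem_biUnion.1 hx
      exact ⟨r, hr⟩)
    y hynn hy
end
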